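/- arXiv:1004.4827 — 7 statements merged into one kernel-verified Lean document; each statement's English description precedes it below -/
import Mathlib

section
/- If D is a minimal strongly connected digraph, then every strongly connected subdigraph of D is also a minimal strongly connected digraph. -/
/-- Reachability in a digraph given by its arc set `A`. -/
def Reach {α : Type*} (A : Finset (α × α)) (u v : α) : Prop :=
  Relation.ReflTransGen (fun a b => (a, b) ∈ A) u v

/-- A digraph with vertex set `V` and arc set `A` is strongly connected if
every vertex reaches every other vertex by a directed path. -/
def StrongConn {α : Type*} (V : Finset α) (A : Finset (α × α)) : Prop :=
  ∀ u ∈ V, ∀ v ∈ V, Reach A u v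

/-- Minimal strongly connected: strongly connected and removing any arc
destroys strong connectivity. -/
def MSC {α : Type*} [DecidableEq α] (V : Finset α) (A : Finset (α × α)) : Prop :=
  StrongConn V A ∧ ∀ a ∈ A, ¬ StrongConn V (A.erase a)

/-- `l` is a directed (simple) path from `u` to `v` in the digraph with arc set `A`. -/
def IsPath {α : Type*} (A : Finset (α × α)) (u v : α) (l : List α) : Prop :=
  l.Chain' (fun a b => (a, b) ∈ A) ∧ l.head? = some u ∧ l.getLast? = some v ∧ l.Nodup

/-- `(u,v)` is a transitive arc: it is an arc and there is a directed path from
`u` to `v` distinct from the single arc `(u,v)`. -/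
def TransArc {α : Type*} (A : Finset (α × α)) (u v : α) : Prop :=
  (u, v) ∈ A ∧ ∃ l, IsPath A u v l ∧ l ≠ [u, v]

/-- `l` (a list of distinct vertices, of length ≥ 2) is a directed cycle:
consecutive vertices are joined by arcs, and there is an arc from the last
vertex back to the first. -/
def IsCycle {α : Type*} (A : Finset (α × α)) (l : List α) : Prop :=
  ∃ h : l ≠ [], l.Nodup ∧ 2 ≤ l.length ∧
    List.Chain (fun a b => (a, b) ∈ A) (l.getLast h) l

/-- Well-formedness: nonempty vertex set, arcs join vertices of `V`, no loops. -/
def GoodDigraph {α : Type*} (V : Finset α) (A : Finset (α × α)) : Prop :=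
  V.Nonempty ∧ ∀ a ∈ A, a.1 ∈ V ∧ a.2 ∈ V ∧ a.1 ≠ a.2

/-- Outdegree of a vertex. -/
def outdeg {α : Type*} [DecidableEq α] (A : Finset (α × α)) (v : α) : ℕ :=
  (A.filter (fun a => a.1 = v)).card

/-- Indegree of a vertex. -/
def indeg {α : Type*} [DecidableEq α] (A : Finset (α × α)) (v : α) : ℕ :=
  (A.filter (fun a => a.2 = v)).card

/-- A linear vertex has indegree and outdegree equal to 1. -/
def LinearVertex {α : Type*} [DecidableEq α] (A : Finset (α × α)) (v : α) : Prop :=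
  indeg A v = 1 ∧ outdeg A v = 1

/-- The digraph is a directed `n`-cycle: its vertices can be listed
`v₁, …, vₙ` so that the arcs are exactly `(v₁,v₂), …, (vₙ,v₁)`. -/
def IsCycleDigraph {α : Type*} [DecidableEq α] (V : Finset α) (A : Finset (α × α)) : Prop :=
  ∃ l : List α, l.Nodup ∧ 2 ≤ l.length ∧ l.toFinset = V ∧ A = (l.zip (l.rotate 1)).toFinset

/-- A directed tree: every arc is accompanied by its reverse, and the
underlying undirected graph (on the vertex set `V`) is a tree. -/
def IsDirTree {α : Type*} [DecidableEq α] (V : Finset α) (A : Finset (α × α)) : Prop :=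
  (∀ u v : α, (u, v) ∈ A → (v, u) ∈ A) ∧
  (SimpleGraph.fromRel (fun a b : {x // x ∈ V} => ((a : α), (b : α)) ∈ A)).IsTree

/-- `(V', A')` is the (internal or external) expansion of `(V, A)` by the new
vertex `v`.  Internal: an arc `(u,w)` is replaced by `(u,v)` and `(v,w)`.
External: the arcs `(u,v)` and `(v,w)` are added for vertices `u, w ∈ V`. -/
def IsExpansionBy {α : Type*} [DecidableEq α] (v : α) (V : Finset α) (A : Finset (α × α))
    (V' : Finset α) (A' : Finset (α × α)) : Prop :=
  v ∉ V ∧ V' = insert v V ∧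
    ((∃ u w, (u, w) ∈ A ∧ A' = insert (u, v) (insert (v, w) (A.erase (u, w)))) ∨
     (∃ u ∈ V, ∃ w ∈ V, A' = insert (u, v) (insert (v, w) A)))

lemma reach_erase_aux {α : Type*} [DecidableEq α] {A : Finset (α × α)} {a : α × α}
    (hp : Reach (A.erase a) a.1 a.2) {u v : α} (h : Reach A u v) :
    Reach (A.erase a) u v := by
  induction h with
  | refl => exact Relation.ReflTransGen.refl
  | @tail b c _ hbc ih =>
    by_cases he : (b, c) = a
    · refine ih.trans ?_
      obtain ⟨rfl, rfl⟩ : b = a.1 ∧ c = a.2 := by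
        constructor <;> (rw [← he])
      exact hp
    · exact ih.tail (Finset.mem_erase.mpr ⟨he, hbc⟩)

/-- every strongly connected subdigraph of an MSC digraph is MSC. -/
theorem stmt_1 {α : Type*} [DecidableEq α] (V V' : Finset α) (A A' : Finset (α × α))
    (h : MSC V A) (hV : V' ⊆ V) (hA : A' ⊆ A)
    (hsub : ∀ a ∈ A', a.1 ∈ V' ∧ a.2 ∈ V')
    (hsc : StrongConn V' A') : MSC V' A' := by
  obtain ⟨hscV, hmin⟩ := h
  refine ⟨hsc, fun a ha hcon => ?_⟩
  apply hmin a (hA ha)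
  intro u hu v hv
  have hp : Reach (A.erase a) a.1 a.2 := by
    have h1 := hcon a.1 (hsub a ha).1 a.2 (hsub a ha).2
    exact Relation.ReflTransGen.mono
      (fun x y hxy => Finset.erase_subset_erase a hA hxy) _ _ h1
  exact reach_erase_aux hp (hscV u hu v hv)
end

section
/- Contracting a directed cycle in a minimal strongly connected digraph yields a minimal strongly connected digraph. -/
section Aux
variable {α : Type*}

lemma chain'_reach_last {r : α → α → Prop} :
    ∀ (l : List α) (h : l ≠ []), l.Chain' r → ∀ a ∈ l,
      Relation.ReflTransGen r a (l.getLast h) := by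
  intro l
  induction l with
  | nil => simp
  | cons b t ih =>
    intro h hch a ha
    cases t with
    | nil =>
      simp only [List.mem_singleton] at ha; subst ha
      exact Relation.ReflTransGen.refl
    | cons b' t' =>
      obtain ⟨hr, hch'⟩ := List.isChain_cons_cons.mp hch
      have h2 : (b' :: t') ≠ [] := by simp
      rw [List.getLast_cons h2]
      rcases List.mem_cons.mp ha with rfl | ha
      · exact Relation.ReflTransGen.head hr (ih h2 hch' b' (by simp))
      · exact ih h2 hch' a ha

lemma chain'_reach_head {r : α → α → Prop} :
    ∀ (l : List α) (h : l ≠ []), l.Chain' r → ∀ a ∈ l,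
      Relation.ReflTransGen r (l.head h) a := by
  intro l
  induction l with
  | nil => simp
  | cons b t ih =>
    intro h hch a ha
    rcases List.mem_cons.mp ha with rfl | ha
    · exact Relation.ReflTransGen.refl
    · cases t with
      | nil => simp at ha
      | cons b' t' =>
        obtain ⟨hr, hch'⟩ := List.isChain_cons_cons.mp hch
        exact Relation.ReflTransGen.head hr (ih (by simp) hch' a ha)

lemma chain_strengthen {r s : α → α → Prop} :
    ∀ {a : α} {l : List α}, List.Chain r a l →
      (∀ p q, r p q → p ∈ a :: l → q ∈ l → s p q) → List.Chain s a l := by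
  intro a l
  induction l generalizing a with
  | nil => intro _ _; exact List.Chain.nil
  | cons b t ih =>
    intro hch hs
    obtain ⟨hr, hch'⟩ := List.isChain_cons_cons.mp hch
    · refine List.IsChain.cons_cons (hs _ _ hr (by simp) (by simp)) (ih hch' ?_)
      intro p q hpq hp hq
      refine hs p q hpq ?_ ?_
      · rcases List.mem_cons.mp hp with rfl | hp <;> simp [hp]
      · simp [hq]

end Aux

lemma cycle_reach {α : Type*} {s : α → α → Prop} (l : List α) (h : l ≠ [])
    (hch : List.Chain s (l.getLast h) l) : ∀ p ∈ l, ∀ q ∈ l, Relation.ReflTransGen s p q := by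
  cases l with
  | nil => exact absurd rfl h
  | cons hd tl =>
    obtain ⟨harc, hch'⟩ := List.isChain_cons_cons.mp hch
    · have hch'' : (hd :: tl).Chain' s := hch'
      intro p hp q hq
      refine (chain'_reach_last _ (List.cons_ne_nil hd tl) hch'' p hp).trans
        (Relation.ReflTransGen.head harc ?_)
      exact chain'_reach_head _ (List.cons_ne_nil hd tl) hch'' q hq

/-- contracting a directed cycle `c` of an MSC digraph to the
vertex `x ∈ c` (removing the arcs of the cycle, redirecting the remaining arcs
to `x`, and deleting duplicates and loops) yields an MSC digraph. -/
theorem stmt_2 {α : Type*} [DecidableEq α] (V : Finset α) (A : Finset (α × α))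
    (hg : GoodDigraph V A) (h : MSC V A)
    (c : List α) (hc : IsCycle A c) (hcV : c.toFinset ⊆ V) (x : α) (hx : x ∈ c) :
    MSC ((V \ c.toFinset) ∪ {x})
      ((A.image (fun a => (if a.1 ∈ c then x else a.1, if a.2 ∈ c then x else a.2))).filter
        (fun a => a.1 ≠ a.2)) := by
  classical
  obtain ⟨hVne, harcs⟩ := hg
  obtain ⟨hsc, hmin⟩ := h
  obtain ⟨hne, hnodup, hlen, hchain⟩ := hc
  have hxV : x ∈ V := hcV (List.mem_toFinset.mpr hx)
  let π : α → α := fun a => if a ∈ c then x else a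
  let A' : Finset (α × α) :=
    (A.image (fun a => (if a.1 ∈ c then x else a.1, if a.2 ∈ c then x else a.2))).filter
      (fun a => a.1 ≠ a.2)
  let V' : Finset α := (V \ c.toFinset) ∪ {x}
  show MSC V' A'
  have hπc : ∀ a ∈ c, π a = x := fun a ha => if_pos ha
  have hπn : ∀ a, a ∉ c → π a = a := fun a ha => if_neg ha
  have hπmem : ∀ u ∈ V, π u ∈ V' := by
    intro u hu
    by_cases hmem : u ∈ c
    · rw [hπc u hmem]; exact Finset.mem_union_right _ (Finset.mem_singleton_self x)
    · rw [hπn u hmem]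
      exact Finset.mem_union_left _
        (Finset.mem_sdiff.mpr ⟨hu, fun hm => hmem (List.mem_toFinset.mp hm)⟩)
  have hproj : ∀ {p q : α}, Reach A p q → Reach A' (π p) (π q) := by
    intro p q hpq
    induction hpq with
    | refl => exact Relation.ReflTransGen.refl
    | @tail b d hstep harc ih =>
      by_cases hbd : π b = π d
      · exact hbd ▸ ih
      · exact ih.tail (Finset.mem_filter.mpr ⟨Finset.mem_image.mpr ⟨(b, d), harc, rfl⟩, hbd⟩)
  have hscA' : StrongConn V' A' := by
    have hpre : ∀ w' ∈ V', ∃ w ∈ V, π w = w' := by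
      intro w' hw'
      rcases Finset.mem_union.mp hw' with hw' | hw'
      · obtain ⟨hw, hwc⟩ := Finset.mem_sdiff.mp hw'
        exact ⟨w', hw, hπn _ (fun hmm => hwc (List.mem_toFinset.mpr hmm))⟩
      · rw [Finset.mem_singleton] at hw'
        exact ⟨x, hxV, by rw [hπc x hx, hw']⟩
    intro u' hu' v' hv'
    obtain ⟨u, hu, rfl⟩ := hpre u' hu'
    obtain ⟨v, hv, rfl⟩ := hpre v' hv'
    exact hproj (hsc u hu v hv)
  refine ⟨hscA', ?_⟩
  intro a' ha' hsc''
  obtain ⟨haimg, hane⟩ := Finset.mem_filter.mp ha'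
  obtain ⟨⟨e1, e2⟩, heA, heπ⟩ := Finset.mem_image.mp haimg
  refine hmin (e1, e2) heA ?_
  -- arcs with both ends on the cycle survive the erasure
  have hecyc : ∀ p q : α, (p, q) ∈ A → p ∈ c → q ∈ c → (p, q) ∈ A.erase (e1, e2) := by
    intro p q hpq hp hq
    refine Finset.mem_erase.mpr ⟨?_, hpq⟩
    intro hpe
    obtain ⟨h1, h2⟩ := Prod.mk.injEq .. ▸ hpe
    subst h1; subst h2
    rw [if_pos hp, if_pos hq] at heπ
    rw [← heπ] at hane
    exact hane rfl
  have hlastc : c.getLast hne ∈ c := List.getLast_mem hne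
  have hchain2 : List.Chain (fun p q => (p, q) ∈ A.erase (e1, e2)) (c.getLast hne) c := by
    refine chain_strengthen hchain ?_
    intro p q hpq hp hq
    refine hecyc p q hpq ?_ hq
    rcases List.mem_cons.mp hp with rfl | hp
    · exact hlastc
    · exact hp
  have cycReach : ∀ p ∈ c, ∀ q ∈ c, Reach (A.erase (e1, e2)) p q :=
    cycle_reach c hne hchain2
  have sameProj : ∀ p q : α, π p = π q → Reach (A.erase (e1, e2)) p q := by
    intro p q hpq
    by_cases hp : p ∈ c
    · by_cases hq : q ∈ c
      · exact cycReach p hp q hq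
      · rw [hπc p hp, hπn q hq] at hpq
        exact absurd (show q ∈ c by rw [← hpq]; exact hx) hq
    · by_cases hq : q ∈ c
      · rw [hπn p hp, hπc q hq] at hpq
        exact absurd (show p ∈ c by rw [hpq]; exact hx) hp
      · rw [hπn p hp, hπn q hq] at hpq
        exact hpq ▸ Relation.ReflTransGen.refl
  have liftArc : ∀ b' ∈ A'.erase a',
      ∃ s t : α, (s, t) ∈ A.erase (e1, e2) ∧ π s = b'.1 ∧ π t = b'.2 ∧ s ∈ V ∧ t ∈ V := by
    intro b' hb'
    obtain ⟨hbne, hbA'⟩ := Finset.mem_erase.mp hb'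
    obtain ⟨hbimg, _⟩ := Finset.mem_filter.mp hbA'
    obtain ⟨⟨s1, s2⟩, hstA, hstπ⟩ := Finset.mem_image.mp hbimg
    refine ⟨s1, s2, Finset.mem_erase.mpr ⟨?_, hstA⟩, congrArg Prod.fst hstπ,
      congrArg Prod.snd hstπ, (harcs _ hstA).1, (harcs _ hstA).2.1⟩
    intro hst
    obtain ⟨h1, h2⟩ := Prod.mk.injEq .. ▸ hst
    subst h1; subst h2
    exact hbne (hstπ.symm.trans heπ)
  have key : ∀ (u : α) (v' : α),
      Relation.ReflTransGen (fun a b => (a, b) ∈ A'.erase a') (π u) v' →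
      ∀ q, π q = v' → Reach (A.erase (e1, e2)) u q := by
    intro u v' hreach
    induction hreach with
    | refl => intro q hq; exact sameProj u q hq.symm
    | @tail b d hstep harc ih =>
      intro q hq
      obtain ⟨s, t, hst, hs, ht, hsV, htV⟩ := liftArc (b, d) harc
      exact ((ih s hs).tail hst).trans (sameProj t q (ht.trans hq.symm))
  intro u hu v hv
  exact key u (π v) (hsc'' (π u) (hπmem u hu) (π v) (hπmem v hv)) v rfl
end

section
/- Every minimal strongly connected digraph of order n ≥ 2 has at most 2(n−1) arcs. -/
lemma reach_mono {α : Type*} {A B : Finset (α × α)} (h : A ⊆ B) {u v : α}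
    (hr : Reach A u v) : Reach B u v :=
  Relation.ReflTransGen.mono (fun _ _ hab => h hab) _ _ hr

lemma reach_cross {α : Type*} [DecidableEq α] {A : Finset (α × α)} {S : Finset α} {x y : α}
    (h : Reach A x y) (hx : x ∈ S) (hy : y ∉ S) :
    ∃ u v, u ∈ S ∧ v ∉ S ∧ (u, v) ∈ A := by
  induction h with
  | refl => exact absurd hx hy
  | tail hxb hbc ih =>
    rename_i b c
    by_cases hb : b ∈ S
    · exact ⟨b, c, hb, hy, hbc⟩
    · exact ih hb

lemma reach_swap {α : Type*} [DecidableEq α] {A : Finset (α × α)} {u v : α}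
    (h : Reach (A.image Prod.swap) u v) : Reach A v u := by
  induction h with
  | refl => exact Relation.ReflTransGen.refl
  | tail _ hbc ih =>
    rename_i b c
    obtain ⟨⟨x, y⟩, hxy, he⟩ := Finset.mem_image.1 hbc
    simp only [Prod.swap_prod_mk, Prod.mk.injEq] at he
    obtain ⟨rfl, rfl⟩ := he
    exact Relation.ReflTransGen.head hxy ih

lemma span_aux {α : Type*} [DecidableEq α] (V : Finset α) (A : Finset (α × α)) (r : α)
    (hA : ∀ a ∈ A, a.2 ∈ V) (hreach : ∀ v ∈ V, Reach A r v) :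
    ∀ k (S : Finset α), S ⊆ V → r ∈ S → (V \ S).card = k →
      ∀ B : Finset (α × α), B ⊆ A → B.card + 1 ≤ S.card → (∀ v ∈ S, Reach B r v) →
      ∃ B' ⊆ A, B'.card + 1 ≤ V.card ∧ ∀ v ∈ V, Reach B' r v := by
  intro k
  induction k with
  | zero =>
    intro S hSV hrS hcard B hBA hBcard hBreach
    have hVS : V = S := by
      apply Finset.Subset.antisymm _ hSV
      intro x hx
      by_contra hxS
      have : x ∈ V \ S := Finset.mem_sdiff.2 ⟨hx, hxS⟩
      simp [Finset.card_eq_zero.1 hcard] at this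
    exact ⟨B, hBA, by rw [hVS]; exact hBcard, fun v hv => hBreach v (hVS ▸ hv)⟩
  | succ k ih =>
    intro S hSV hrS hcard B hBA hBcard hBreach
    have hne : (V \ S).Nonempty := by
      rw [← Finset.card_pos, hcard]; omega
    obtain ⟨w, hw⟩ := hne
    rw [Finset.mem_sdiff] at hw
    obtain ⟨u, v, huS, hvS, huv⟩ := reach_cross (hreach w hw.1) hrS hw.2
    have hvV : v ∈ V := hA _ huv
    have hreach' : ∀ x ∈ insert v S, Reach (insert (u, v) B) r x := by
      intro x hx
      rcases Finset.mem_insert.1 hx with rfl | hxS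
      · exact Relation.ReflTransGen.tail
          (reach_mono (Finset.subset_insert _ _) (hBreach u huS))
          (Finset.mem_insert_self _ _)
      · exact reach_mono (Finset.subset_insert _ _) (hBreach x hxS)
    apply ih (insert v S)
      (Finset.insert_subset hvV hSV)
      (Finset.mem_insert_of_mem hrS)
      (by
        rw [Finset.sdiff_insert, Finset.card_erase_of_mem (Finset.mem_sdiff.2 ⟨hvV, hvS⟩), hcard]
        omega)

      
      (insert (u, v) B)
      (Finset.insert_subset huv hBA)
      (by
        rw [Finset.card_insert_of_notMem hvS]
        calc (insert (u, v) B).card + 1 ≤ B.card + 1 + 1 :=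
              by have := Finset.card_insert_le (u, v) B; omega
          _ ≤ S.card + 1 := by omega)
      hreach'

lemma reach_swap' {α : Type*} [DecidableEq α] {A : Finset (α × α)} {u v : α}
    (h : Reach A u v) : Reach (A.image Prod.swap) v u := by
  induction h with
  | refl => exact Relation.ReflTransGen.refl
  | tail _ hbc ih =>
    exact Relation.ReflTransGen.head (Finset.mem_image_of_mem Prod.swap hbc) ih

lemma span {α : Type*} [DecidableEq α] (V : Finset α) (A : Finset (α × α)) (r : α)
    (hr : r ∈ V) (hA : ∀ a ∈ A, a.2 ∈ V) (hreach : ∀ v ∈ V, Reach A r v) :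
    ∃ B ⊆ A, B.card + 1 ≤ V.card ∧ ∀ v ∈ V, Reach B r v :=
  span_aux V A r hA hreach _ {r} (Finset.singleton_subset_iff.2 hr)
    (Finset.mem_singleton_self r) rfl ∅ (Finset.empty_subset _) (by simp)
    (by
      intro v hv
      rw [Finset.mem_singleton] at hv
      subst hv
      exact Relation.ReflTransGen.refl)


/-- an MSC digraph of order `n ≥ 2` has at most `2(n-1)` arcs. -/
theorem stmt_4 {α : Type*} [DecidableEq α] (V : Finset α) (A : Finset (α × α))
    (hg : GoodDigraph V A) (hn : 2 ≤ V.card) (h : MSC V A) :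
    A.card ≤ 2 * (V.card - 1) := by
  obtain ⟨hVne, hgood⟩ := hg
  obtain ⟨r, hr⟩ := hVne
  obtain ⟨hSC, hmin⟩ := h
  obtain ⟨Bo, hBoA, hBocard, hBo⟩ :=
    span V A r hr (fun a ha => (hgood a ha).2.1) (fun v hv => hSC r hr v hv)
  obtain ⟨Bi', hBi'A', hBi'card, hBi'⟩ :=
    span V (A.image Prod.swap) r hr
      (by
        intro a ha
        obtain ⟨b, hb, rfl⟩ := Finset.mem_image.1 ha
        exact (hgood b hb).1)
      (fun v hv => reach_swap' (hSC v hv r hr))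
  set Bi := Bi'.image Prod.swap with hBidef
  have hBiA : Bi ⊆ A := by
    intro a ha
    obtain ⟨b, hb, rfl⟩ := Finset.mem_image.1 ha
    obtain ⟨c, hc, rfl⟩ := Finset.mem_image.1 (hBi'A' hb)
    rwa [Prod.swap_swap]
  have hBiReach : ∀ u ∈ V, Reach Bi u r := by
    intro u hu
    exact reach_swap' (hBi' u hu)
  set B := Bo ∪ Bi with hBdef
  have hBA : B ⊆ A := Finset.union_subset hBoA hBiA
  have hBSC : StrongConn V B := by
    intro u hu v hv
    exact (reach_mono Finset.subset_union_right (hBiReach u hu)).trans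
      (reach_mono Finset.subset_union_left (hBo v hv))
  have hAB : A ⊆ B := by
    intro a ha
    by_contra haB
    exact hmin a ha (fun u hu v hv =>
      reach_mono ((Finset.subset_erase).2 ⟨hBA, haB⟩) (hBSC u hu v hv))
  have h1 : B.card ≤ Bo.card + Bi.card := Finset.card_union_le _ _
  have h2 : Bi.card ≤ Bi'.card := Finset.card_image_le
  have h3 : A.card ≤ B.card := Finset.card_le_card hAB
  omega
end

section
/- A minimal strongly connected digraph of order n ≥ 2 has exactly 2(n−1) arcs if and only if it is a directed tree (the digraph obtained from a tree on n vertices by replacing each edge {u,v} with the two arcs (u,v) and (v,u)). -/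
set_option linter.unusedSectionVars false
namespace Aux
variable {α : Type*} [DecidableEq α]

lemma reach_mono {A B : Finset (α × α)} (h : A ⊆ B) {u v : α} (r : Reach A u v) :
    Reach B u v :=
  Relation.ReflTransGen.mono (fun _ _ hab => h hab) _ _ r

lemma reach_refl {A : Finset (α × α)} (u : α) : Reach A u u := Relation.ReflTransGen.refl

lemma reach_trans {A : Finset (α × α)} {u v w : α} (h1 : Reach A u v) (h2 : Reach A v w) :
    Reach A u w := Relation.ReflTransGen.trans h1 h2

lemma reach_single {A : Finset (α × α)} {u v : α} (h : (u, v) ∈ A) : Reach A u v :=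
  Relation.ReflTransGen.single h

lemma strongConn_mono {V : Finset α} {A B : Finset (α × α)} (h : A ⊆ B)
    (hs : StrongConn V A) : StrongConn V B :=
  fun u hu v hv => reach_mono h (hs u hu v hv)

/-- rerouting: if the endpoints of `e` stay connected after erasing `e`,
all reachability survives. -/
lemma reach_erase {A : Finset (α × α)} {e : α × α}
    (he : Reach (A.erase e) e.1 e.2) {x y : α} (h : Reach A x y) :
    Reach (A.erase e) x y := by
  induction h with
  | refl => exact reach_refl _
  | tail _ hab ih =>
    rename_i b c _
    by_cases hbc : (b, c) = e
    · subst hbc; exact reach_trans ih he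
    · exact Relation.ReflTransGen.tail ih (Finset.mem_erase.2 ⟨hbc, hab⟩)

lemma msc_eq_of_subset {V : Finset α} {A B : Finset (α × α)} (h : MSC V A)
    (hBA : B ⊆ A) (hB : StrongConn V B) : A = B := by
  by_contra hne
  have hss : B ⊂ A := lt_of_le_of_ne hBA (fun h' => hne h'.symm)
  obtain ⟨a, haA, haB⟩ := Finset.exists_of_ssubset hss
  exact h.2 a haA (strongConn_mono (fun x hx => Finset.mem_erase.2
    ⟨fun h' => haB (h' ▸ hx), hBA hx⟩) hB)

lemma exists_msc_subset {V : Finset α} :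
    ∀ (A : Finset (α × α)), StrongConn V A →
      ∃ B ⊆ A, StrongConn V B ∧ ∀ e ∈ B, ¬ StrongConn V (B.erase e) := by
  intro A
  induction A using Finset.strongInduction with
  | _ A ih =>
    intro hA
    by_cases h : ∀ e ∈ A, ¬ StrongConn V (A.erase e)
    · exact ⟨A, le_refl _, hA, h⟩
    · push_neg at h
      obtain ⟨e, he, hsc⟩ := h
      obtain ⟨B, hB1, hB2, hB3⟩ := ih (A.erase e) (Finset.erase_ssubset he) hsc
      exact ⟨B, hB1.trans (Finset.erase_subset _ _), hB2, hB3⟩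

end Aux

namespace Aux
variable {α : Type*} [DecidableEq α]

lemma reach_cross {A : Finset (α × α)} {S : Finset α} {r v : α}
    (h : Reach A r v) (hr : r ∈ S) (hv : v ∉ S) : ∃ e ∈ A, e.1 ∈ S ∧ e.2 ∉ S := by
  induction h with
  | refl => exact absurd hr hv
  | tail _ hab ih =>
    rename_i b c _
    by_cases hb : b ∈ S
    · exact ⟨(b, c), hab, hb, hv⟩
    · exact ih hb

lemma reach_last {A : Finset (α × α)} {x y : α} (h : Reach A x y) (hne : x ≠ y) :
    ∃ e ∈ A, e.2 = y := by
  induction h with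
  | refl => exact absurd rfl hne
  | tail _ hab _ => exact ⟨_, hab, rfl⟩

lemma reach_first {A : Finset (α × α)} {x y : α} (h : Reach A x y) (hne : x ≠ y) :
    ∃ c, (x, c) ∈ A ∧ Reach A c y := by
  rcases Relation.ReflTransGen.cases_head h with h | ⟨c, hc, h'⟩
  · exact absurd h hne
  · exact ⟨c, hc, h'⟩

/-- an out-arborescence of `(V, A)` rooted at `r`. -/
structure Arb (V : Finset α) (A : Finset (α × α)) (r : α) (T : Finset (α × α)) : Prop where
  sub : T ⊆ A
  head_ne : ∀ e ∈ T, e.2 ≠ r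
  head_mem : ∀ e ∈ T, e.2 ∈ V
  inj : ∀ e ∈ T, ∀ f ∈ T, e.2 = f.2 → e = f
  reach : ∀ v ∈ V, Reach T r v

lemma exists_arb {V : Finset α} {A : Finset (α × α)} {r : α} (hr : r ∈ V)
    (hVA : ∀ a ∈ A, a.2 ∈ V) (hreach : ∀ v ∈ V, Reach A r v) :
    ∃ T, Arb V A r T := by
  suffices H : ∀ (k : ℕ) (S : Finset α) (T : Finset (α × α)), (V \ S).card ≤ k → S ⊆ V →
      r ∈ S → T ⊆ A → (∀ e ∈ T, e.2 ≠ r) → (∀ e ∈ T, e.2 ∈ S) →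
      (∀ e ∈ T, ∀ f ∈ T, e.2 = f.2 → e = f) → (∀ v ∈ S, Reach T r v) →
      ∃ T', Arb V A r T' by
    refine H (V \ {r}).card {r} ∅ le_rfl (Finset.singleton_subset_iff.2 hr)
      (Finset.mem_singleton_self r) (Finset.empty_subset _) ?_ ?_ ?_ ?_
    · intro e he; exact absurd he (Finset.notMem_empty e)
    · intro e he; exact absurd he (Finset.notMem_empty e)
    · intro e he; exact absurd he (Finset.notMem_empty e)
    · intro v hv; rw [Finset.mem_singleton] at hv; subst hv; exact reach_refl _
  intro k
  induction k with
  | zero =>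
    intro S T hcard hSV hrS hTA hne hmem hinj hreach'
    have hVS : V ⊆ S := by
      rw [Nat.le_zero, Finset.card_eq_zero, Finset.sdiff_eq_empty_iff_subset] at hcard
      exact hcard
    exact ⟨T, hTA, hne, fun e he => hSV (hmem e he), hinj, fun v hv => hreach' v (hVS hv)⟩
  | succ k ih =>
    intro S T hcard hSV hrS hTA hne hmem hinj hreach'
    by_cases hVS : V ⊆ S
    · exact ⟨T, hTA, hne, fun e he => hSV (hmem e he), hinj, fun v hv => hreach' v (hVS hv)⟩
    · obtain ⟨v, hv, hvS⟩ := Finset.not_subset.1 hVS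
      obtain ⟨e, heA, he1, he2⟩ := reach_cross (hreach v hv) hrS hvS
      obtain ⟨x, y⟩ := e
      simp only at he1 he2
      have hyV : y ∈ V := hVA _ heA
      refine ih (insert y S) (insert (x, y) T) ?_ (Finset.insert_subset hyV hSV)
        (Finset.mem_insert_of_mem hrS) (Finset.insert_subset heA hTA) ?_ ?_ ?_ ?_
      · have : V \ insert y S = (V \ S).erase y := by
          ext z
          simp only [Finset.mem_sdiff, Finset.mem_insert, Finset.mem_erase]
          tauto
        rw [this]
        have hy' : y ∈ V \ S := Finset.mem_sdiff.2 ⟨hyV, he2⟩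
        have := Finset.card_erase_of_mem hy'
        omega
      · intro e he
        rcases Finset.mem_insert.1 he with h | h
        · subst h; intro h'; exact he2 ((show y = r from h') ▸ hrS)
        · exact hne e h
      · intro e he
        rcases Finset.mem_insert.1 he with h | h
        · subst h; exact Finset.mem_insert_self _ _
        · exact Finset.mem_insert_of_mem (hmem e h)
      · intro e he f hf hef
        rcases Finset.mem_insert.1 he with h | h <;> rcases Finset.mem_insert.1 hf with h' | h'
        · rw [h, h']
        · exfalso; subst h; exact he2 ((show y = f.2 from hef) ▸ hmem f h')
        · exfalso; subst h'; exact he2 ((show e.2 = y from hef).symm ▸ hmem e h)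
        · exact hinj e h f h' hef
      · intro w hw
        rcases Finset.mem_insert.1 hw with h | h
        · subst h
          exact Relation.ReflTransGen.tail
            (reach_mono (Finset.subset_insert _ _) (hreach' x he1))
            (Finset.mem_insert_self _ _)
        · exact reach_mono (Finset.subset_insert _ _) (hreach' w h)

lemma arb_heads {V : Finset α} {A : Finset (α × α)} {r : α} {T : Finset (α × α)}
    (h : Arb V A r T) (hr : r ∈ V) : T.image Prod.snd = V.erase r := by
  apply Finset.Subset.antisymm
  · intro y hy
    obtain ⟨e, he, rfl⟩ := Finset.mem_image.1 hy
    exact Finset.mem_erase.2 ⟨h.head_ne e he, h.head_mem e he⟩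
  · intro y hy
    rw [Finset.mem_erase] at hy
    obtain ⟨e, he, he2⟩ := reach_last (h.reach y hy.2) (Ne.symm hy.1)
    exact Finset.mem_image.2 ⟨e, he, he2⟩

lemma arb_card {V : Finset α} {A : Finset (α × α)} {r : α} {T : Finset (α × α)}
    (h : Arb V A r T) (hr : r ∈ V) : T.card = V.card - 1 := by
  rw [← Finset.card_erase_of_mem hr, ← arb_heads h hr]
  exact (Finset.card_image_of_injOn (fun e he f hf hef => h.inj e he f hf hef)).symm

/-- avoid the unique in-arc of a "leaf" vertex `v` when reaching `w ≠ v`. -/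
lemma reach_avoid {T : Finset (α × α)} {v : α} (hvt : ∀ e ∈ T, e.1 ≠ v)
    {e₀ : α × α} (he₀ : e₀.2 = v) {r w : α} (hw : w ≠ v) (h : Reach T r w) :
    Reach (T.erase e₀) r w := by
  induction h with
  | refl => exact reach_refl _
  | tail _ hab ih =>
    rename_i b c hrb
    refine Relation.ReflTransGen.tail (ih (hvt _ hab)) (Finset.mem_erase.2 ⟨?_, hab⟩)
    intro hcontra
    exact hw (by rw [← hcontra] at he₀; exact he₀)
end Aux

namespace Aux
variable {α : Type*} [DecidableEq α]

def rev (A : Finset (α × α)) : Finset (α × α) := A.image Prod.swap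

lemma mem_rev {A : Finset (α × α)} {e : α × α} : e ∈ rev A ↔ e.swap ∈ A := by
  constructor
  · intro h
    obtain ⟨a, ha, rfl⟩ := Finset.mem_image.1 h
    simpa using ha
  · intro h
    exact Finset.mem_image.2 ⟨e.swap, h, Prod.swap_swap e⟩

lemma mem_rev' {A : Finset (α × α)} {x y : α} : (x, y) ∈ rev A ↔ (y, x) ∈ A := mem_rev

lemma rev_card {A : Finset (α × α)} : (rev A).card = A.card :=
  Finset.card_image_of_injective _ Prod.swap_injective

lemma rev_subset {A B : Finset (α × α)} (h : A ⊆ rev B) : rev A ⊆ B := by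
  intro e he
  have := h (mem_rev.1 he)
  rwa [mem_rev, Prod.swap_swap] at this

lemma reach_rev {A : Finset (α × α)} {u v : α} (h : Reach A u v) : Reach (rev A) v u := by
  induction h with
  | refl => exact reach_refl _
  | tail _ hab ih =>
    exact Relation.ReflTransGen.head (mem_rev'.2 hab) ih

lemma msc_union_trees {V : Finset α} {A : Finset (α × α)} (hg : GoodDigraph V A)
    (h : MSC V A) {r : α} (hr : r ∈ V) :
    ∃ T P, Arb V A r T ∧ Arb V (rev A) r P ∧ A = T ∪ rev P := by
  obtain ⟨T, hT⟩ := exists_arb hr (fun a ha => (hg.2 a ha).2.1) (fun v hv => h.1 r hr v hv)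
  obtain ⟨P, hP⟩ := exists_arb hr (fun a ha => (hg.2 _ (mem_rev.1 ha)).1)
    (fun v hv => reach_rev (h.1 v hv r hr))
  have hPA : rev P ⊆ A := rev_subset hP.sub
  have hsc : StrongConn V (T ∪ rev P) := by
    intro u hu v hv
    refine reach_trans (reach_mono (Finset.subset_union_right) ?_)
      (reach_mono (Finset.subset_union_left) (hT.reach v hv))
    exact reach_rev (hP.reach u hu)
  exact ⟨T, P, hT, hP, msc_eq_of_subset h (Finset.union_subset hT.sub hPA) hsc⟩

lemma msc_card_le {V : Finset α} {A : Finset (α × α)} (hg : GoodDigraph V A)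
    (h : MSC V A) : A.card ≤ 2 * (V.card - 1) := by
  obtain ⟨r, hr⟩ := hg.1
  obtain ⟨T, P, hT, hP, hA⟩ := msc_union_trees hg h hr
  calc A.card ≤ T.card + (rev P).card := by rw [hA]; exact Finset.card_union_le _ _
    _ = (V.card - 1) + (V.card - 1) := by
        rw [arb_card hT hr, rev_card, arb_card hP hr]
    _ = 2 * (V.card - 1) := by ring

end Aux

namespace Aux
variable {α : Type*} [DecidableEq α]

lemma sym_of_msc_card :
    ∀ (n : ℕ) (V : Finset α) (A : Finset (α × α)), V.card ≤ n →
      GoodDigraph V A → MSC V A → 2 ≤ V.card → A.card = 2 * (V.card - 1) →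
      ∀ u w : α, (u, w) ∈ A → (w, u) ∈ A := by
  intro n
  induction n with
  | zero => intro V A h1 _ _ h2 _; omega
  | succ n ih =>
    intro V A hVn hg h h2 hcard u₀ w₀ huw
    -- case of two vertices
    by_cases hn2 : V.card = 2
    · obtain ⟨hu₀, hw₀, hne₀⟩ := hg.2 _ huw
      have hVuw : V = {u₀, w₀} := by
        apply (Finset.eq_of_subset_of_card_le ?_ ?_).symm
        · intro z hz; rcases Finset.mem_insert.1 hz with rfl | hz
          · exact hu₀
          · rw [Finset.mem_singleton] at hz; subst hz; exact hw₀
        · rw [hn2, Finset.card_insert_of_notMem (by simpa using hne₀),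
            Finset.card_singleton]
      obtain ⟨c, hc, _⟩ := reach_first (h.1 w₀ hw₀ u₀ hu₀) hne₀.symm
      have hcV : c ∈ V := (hg.2 _ hc).2.1
      have : c ≠ w₀ := (hg.2 _ hc).2.2.symm
      have : c = u₀ := by
        rw [hVuw, Finset.mem_insert, Finset.mem_singleton] at hcV; tauto
      subst this; exact hc
    have hn3 : 3 ≤ V.card := by omega
    -- decomposition into two trees
    obtain ⟨r, hr⟩ := hg.1
    obtain ⟨T, P, hT, hP, hA⟩ := msc_union_trees hg h hr
    set Q : Finset (α × α) := rev P with hQdef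
    have hQsub : Q ⊆ A := rev_subset hP.sub
    have hQreach : ∀ u ∈ V, Reach Q u r := fun u hu => reach_rev (hP.reach u hu)
    have hQswap : ∀ e : α × α, e ∈ Q ↔ e.swap ∈ P := fun e => mem_rev
    have hQtail_ne : ∀ e ∈ Q, e.1 ≠ r := by
      intro e he
      have := hP.head_ne e.swap ((hQswap e).1 he)
      simpa using this
    have hQinj : ∀ e ∈ Q, ∀ f ∈ Q, e.1 = f.1 → e = f := by
      intro e he f hf hef
      have := hP.inj e.swap ((hQswap e).1 he) f.swap ((hQswap f).1 hf) (by simpa using hef)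
      exact Prod.swap_injective this
    have hQtails : Q.image Prod.fst = V.erase r := by
      have : Q.image Prod.fst = P.image Prod.snd := by
        rw [hQdef]; show (P.image Prod.swap).image Prod.fst = _
        rw [Finset.image_image]; rfl
      rw [this, arb_heads hP hr]
    have hTcard : T.card = V.card - 1 := arb_card hT hr
    -- disjointness
    have hdisj : ∀ e, e ∈ T → e ∈ Q → False := by
      have hQc : Q.card = V.card - 1 := by rw [hQdef, rev_card]; exact arb_card hP hr
      have hle := Finset.card_union_add_card_inter T Q
      rw [← hA, hTcard, hQc, hcard] at hle
      have : (T ∩ Q).card = 0 := by omega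
      rw [Finset.card_eq_zero] at this
      intro e heT heQ
      have : e ∈ T ∩ Q := Finset.mem_inter.2 ⟨heT, heQ⟩
      simp [‹T ∩ Q = ∅›] at this
    -- a leaf of T
    have hex_leaf : ∃ v ∈ V.erase r, v ∉ T.image Prod.fst := by
      by_contra hcon
      push_neg at hcon
      have hrT : r ∈ T.image Prod.fst := by
        have : (V.erase r).Nonempty := by
          rw [← Finset.card_pos, Finset.card_erase_of_mem hr]; omega
        obtain ⟨w, hw⟩ := this
        rw [Finset.mem_erase] at hw
        obtain ⟨c, hc, _⟩ := reach_first (hT.reach w hw.2) (Ne.symm hw.1)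
        exact Finset.mem_image.2 ⟨(r, c), hc, rfl⟩
      have hVsub : V ⊆ T.image Prod.fst := by
        intro z hz
        by_cases hzr : z = r
        · subst hzr; exact hrT
        · exact hcon z (Finset.mem_erase.2 ⟨hzr, hz⟩)
      have h1 := Finset.card_le_card hVsub
      have h2' := Finset.card_image_le (s := T) (f := Prod.fst)
      omega
    obtain ⟨v, hvVr, hvtails⟩ := hex_leaf
    rw [Finset.mem_erase] at hvVr
    obtain ⟨hvr, hvV⟩ := hvVr
    have hv_no_tail : ∀ e ∈ T, e.1 ≠ v := by
      intro e he hev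
      exact hvtails (Finset.mem_image.2 ⟨e, he, hev⟩)
    -- the unique out-arc (v, b) ∈ Q
    have hvQ : v ∈ Q.image Prod.fst := by rw [hQtails, Finset.mem_erase]; exact ⟨hvr, hvV⟩
    obtain ⟨b, hvbQ⟩ : ∃ bb, (v, bb) ∈ Q := by
      obtain ⟨eQ, heQ, heQ1⟩ := Finset.mem_image.1 hvQ
      exact ⟨eQ.2, by rwa [show (v, eQ.2) = eQ from Prod.ext heQ1.symm rfl]⟩
    have hvbA : (v, b) ∈ A := hQsub hvbQ
    have hbV : b ∈ V := (hg.2 _ hvbA).2.1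
    have hbv : b ≠ v := (hg.2 _ hvbA).2.2.symm
    have out_unique : ∀ y, (v, y) ∈ A → y = b := by
      intro y hy
      rw [hA] at hy
      rcases Finset.mem_union.1 hy with hy' | hy'
      · exact absurd rfl (hv_no_tail _ hy')
      · have := hQinj _ hy' _ hvbQ rfl
        exact congrArg Prod.snd this
    -- the unique in-arc (a, v) ∈ T
    have hvT : v ∈ T.image Prod.snd := by rw [arb_heads hT hr, Finset.mem_erase]; exact ⟨hvr, hvV⟩
    obtain ⟨a, havT⟩ : ∃ aa, (aa, v) ∈ T := by
      obtain ⟨eT, heT, heT2⟩ := Finset.mem_image.1 hvT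
      exact ⟨eT.1, by rwa [show (eT.1, v) = eT from Prod.ext rfl heT2.symm]⟩
    have havA : (a, v) ∈ A := hT.sub havT
    have haV : a ∈ V := (hg.2 _ havA).1
    have hav : a ≠ v := (hg.2 _ havA).2.2
    have in_unique : ∀ x, (x, v) ∈ A → x = a := by
      intro x hx
      rw [hA] at hx
      rcases Finset.mem_union.1 hx with hx' | hx'
      · exact congrArg Prod.fst (hT.inj _ hx' _ havT rfl)
      · -- reparenting contradiction
        exfalso
        have hxa : x ≠ a := by
          intro hxa; subst hxa; exact hdisj _ havT hx'
        have hxv : x ≠ v := (hg.2 _ (hQsub hx')).2.2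
        have hxV : x ∈ V := (hg.2 _ (hQsub hx')).1
        set T₂ : Finset (α × α) := insert (x, v) (T.erase (a, v)) with hT₂
        have hT₂reach : ∀ w ∈ V, Reach T₂ r w := by
          have havoid : ∀ w ∈ V, w ≠ v → Reach (T.erase (a, v)) r w := by
            intro w hw hwv
            exact reach_avoid hv_no_tail rfl hwv (hT.reach w hw)
          intro w hw
          by_cases hwv : w = v
          · subst hwv
            refine Relation.ReflTransGen.tail
              (reach_mono (Finset.subset_insert _ _) (havoid x hxV hxv)) ?_
            exact Finset.mem_insert_self _ _
          · exact reach_mono (Finset.subset_insert _ _) (havoid w hw hwv)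
        have hsub2 : T₂ ∪ Q ⊆ A := by
          apply Finset.union_subset _ hQsub
          apply Finset.insert_subset (hQsub hx')
          exact (Finset.erase_subset _ _).trans hT.sub
        have hsc2 : StrongConn V (T₂ ∪ Q) := by
          intro x' hx'' y' hy'
          refine reach_trans (reach_mono Finset.subset_union_right (hQreach x' hx'')) ?_
          exact reach_mono Finset.subset_union_left (hT₂reach y' hy')
        have hAeq : A = T₂ ∪ Q := msc_eq_of_subset h hsub2 hsc2
        have : (a, v) ∈ T₂ ∪ Q := by rw [← hAeq]; exact havA
        rcases Finset.mem_union.1 this with hmem | hmem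
        · rcases Finset.mem_insert.1 hmem with hmem' | hmem'
          · exact hxa (congrArg Prod.fst hmem').symm
          · exact (Finset.mem_erase.1 hmem').1 rfl
        · exact hdisj _ havT hmem
    -- now the two cases
    by_cases hab : a = b
    · -- pendant two-cycle at v; remove v and use induction
      subst hab
      set V'' : Finset α := V.erase v with hV''
      set A'' : Finset (α × α) := (A.erase (a, v)).erase (v, a) with hA''
      have hva_ne_av : (v, a) ≠ (a, v) := fun hcc => hav (congrArg Prod.fst hcc).symm
      have hmemA'' : ∀ e : α × α, e ∈ A'' ↔ e ∈ A ∧ e ≠ (a, v) ∧ e ≠ (v, a) := by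
        intro e
        simp only [hA'', Finset.mem_erase]
        tauto
      have key : ∀ x y : α, Reach A x y → x ≠ v →
          ((y ≠ v → Reach A'' x y) ∧ (y = v → Reach A'' x a)) := by
        intro x y hxy hx
        induction hxy with
        | refl => exact ⟨fun _ => reach_refl _, fun hh => absurd hh hx⟩
        | @tail p q h1 h2 ih =>
          constructor
          · intro hq
            by_cases hp : p = v
            · subst hp
              have : q = a := out_unique q h2
              subst this
              exact ih.2 rfl
            · refine Relation.ReflTransGen.tail (ih.1 hp) ((hmemA'' _).2 ⟨h2, ?_, ?_⟩)
              · intro hc; exact hq (congrArg Prod.snd hc)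
              · intro hc; exact hp (congrArg Prod.fst hc)
          · intro hq
            subst hq
            have : p = a := in_unique p h2
            subst this
            exact ih.1 hav
      have hsc'' : StrongConn V'' A'' := by
        intro x hx y hy
        rw [hV'', Finset.mem_erase] at hx hy
        exact (key x y (h.1 x hx.2 y hy.2) hx.1).1 hy.1
      have hmsc'' : MSC V'' A'' := by
        refine ⟨hsc'', ?_⟩
        intro e he hesc
        have heA : e ∈ A := ((hmemA'' e).1 he).1
        have heav : e ≠ (a, v) := ((hmemA'' e).1 he).2.1
        have heva : e ≠ (v, a) := ((hmemA'' e).1 he).2.2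
        apply h.2 e heA
        intro x hx y hy
        have hva_mem : (v, a) ∈ A.erase e := Finset.mem_erase.2 ⟨fun hc => heva hc.symm, hQsub hvbQ⟩
        have hav_mem : (a, v) ∈ A.erase e := Finset.mem_erase.2 ⟨fun hc => heav hc.symm, havA⟩
        have hsubE : A''.erase e ⊆ A.erase e := by
          intro f hf
          rw [Finset.mem_erase] at hf ⊢
          exact ⟨hf.1, ((hmemA'' f).1 hf.2).1⟩
        have hx' : (if x = v then a else x) ∈ V'' := by
          split
          · rw [hV'', Finset.mem_erase]; exact ⟨hav, haV⟩
          · rw [hV'', Finset.mem_erase]; exact ⟨by assumption, hx⟩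
        have hy' : (if y = v then a else y) ∈ V'' := by
          split
          · rw [hV'', Finset.mem_erase]; exact ⟨hav, haV⟩
          · rw [hV'', Finset.mem_erase]; exact ⟨by assumption, hy⟩
        have hmid : Reach (A.erase e) (if x = v then a else x) (if y = v then a else y) :=
          reach_mono hsubE (hesc _ hx' _ hy')
        have hstart : Reach (A.erase e) x (if x = v then a else x) := by
          split
          · rename_i hxv; subst hxv; exact reach_single hva_mem
          · exact reach_refl _
        have hend : Reach (A.erase e) (if y = v then a else y) y := by
          split
          · rename_i hyv; subst hyv; exact reach_single hav_mem
          · exact reach_refl _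
        exact reach_trans hstart (reach_trans hmid hend)
      have hgood'' : GoodDigraph V'' A'' := by
        constructor
        · exact ⟨a, Finset.mem_erase.2 ⟨hav, haV⟩⟩
        · intro e he
          have heA : e ∈ A := ((hmemA'' e).1 he).1
          obtain ⟨h1, h2', h3⟩ := hg.2 e heA
          refine ⟨Finset.mem_erase.2 ⟨?_, h1⟩, Finset.mem_erase.2 ⟨?_, h2'⟩, h3⟩
          · intro hc
            apply ((hmemA'' e).1 he).2.2
            have : e.2 = a := out_unique e.2 (by rw [← hc]; exact (show (e.1, e.2) ∈ A from heA))
            rw [← hc, ← this]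
          · intro hc
            apply ((hmemA'' e).1 he).2.1
            have : e.1 = a := in_unique e.1 (by rw [← hc]; exact (show (e.1, e.2) ∈ A from heA))
            rw [← hc, ← this]
      have hcard'' : A''.card = A.card - 2 := by
        have hvaA' : (v, a) ∈ A.erase (a, v) := Finset.mem_erase.2 ⟨hva_ne_av, hQsub hvbQ⟩
        rw [hA'', Finset.card_erase_of_mem hvaA', Finset.card_erase_of_mem havA]
        omega
      have hVcard'' : V''.card = V.card - 1 := Finset.card_erase_of_mem hvV
      have hsym'' := ih V'' A'' (by omega) hgood'' hmsc'' (by omega) (by omega)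
      -- conclude
      by_cases hu₀ : u₀ = v
      · subst hu₀
        have : w₀ = a := out_unique w₀ huw
        subst this
        exact havA
      · by_cases hw₀ : w₀ = v
        · subst hw₀
          have : u₀ = a := in_unique u₀ huw
          subst this
          exact hQsub hvbQ
        · have huwA'' : (u₀, w₀) ∈ A'' := by
            rw [hmemA'']
            refine ⟨huw, ?_, ?_⟩
            · intro hc; exact hw₀ (congrArg Prod.snd hc)
            · intro hc; exact hu₀ (congrArg Prod.fst hc)
          have := hsym'' u₀ w₀ huwA''
          exact ((hmemA'' _).1 this).1
    · -- a ≠ b : derive a contradiction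
      exfalso
      have hab_notA : (a, b) ∉ A := by
        intro habA
        apply h.2 (a, b) habA
        intro x hx y hy
        have s1 : Reach (A.erase (a, b)) a v :=
          reach_single (Finset.mem_erase.2 ⟨fun hc => hbv (congrArg Prod.snd hc).symm, havA⟩)
        have s2 : Reach (A.erase (a, b)) v b :=
          reach_single (Finset.mem_erase.2 ⟨fun hc => hav (congrArg Prod.fst hc).symm, hvbA⟩)
        exact reach_erase (e := (a, b)) (reach_trans s1 s2) (h.1 x hx y hy)
      set V' : Finset α := V.erase v with hV'
      set X : Finset (α × α) := (A.erase (a, v)).erase (v, b) with hX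
      set A' : Finset (α × α) := insert (a, b) X with hA'
      have hmemX : ∀ e : α × α, e ∈ X ↔ e ∈ A ∧ e ≠ (a, v) ∧ e ≠ (v, b) := by
        intro e; simp only [hX, Finset.mem_erase]; tauto
      have hXA : X ⊆ A := fun e he => ((hmemX e).1 he).1
      have haV' : a ∈ V' := Finset.mem_erase.2 ⟨hav, haV⟩
      have hbV' : b ∈ V' := Finset.mem_erase.2 ⟨hbv, hbV⟩
      have key : ∀ x y : α, Reach A x y → x ≠ v →
          ((y ≠ v → Reach A' x y) ∧ (y = v → Reach A' x a)) := by
        intro x y hxy hx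
        induction hxy with
        | refl => exact ⟨fun _ => reach_refl _, fun hh => absurd hh hx⟩
        | @tail p q h1 h2 ih =>
          constructor
          · intro hq
            by_cases hp : p = v
            · subst hp
              have : q = b := out_unique q h2
              subst this
              exact Relation.ReflTransGen.tail (ih.2 rfl) (Finset.mem_insert_self _ _)
            · refine Relation.ReflTransGen.tail (ih.1 hp)
                (Finset.mem_insert_of_mem ((hmemX _).2 ⟨h2, ?_, ?_⟩))
              · intro hc; exact hq (congrArg Prod.snd hc)
              · intro hc; exact hp (congrArg Prod.fst hc)
          · intro hq
            subst hq
            have : p = a := in_unique p h2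
            subst this
            exact ih.1 hav
      have hsc' : StrongConn V' A' := by
        intro x hx y hy
        rw [hV', Finset.mem_erase] at hx hy
        exact (key x y (h.1 x hx.2 y hy.2) hx.1).1 hy.1
      have hgood' : GoodDigraph V' A' := by
        refine ⟨⟨a, haV'⟩, ?_⟩
        intro e he
        rcases Finset.mem_insert.1 he with rfl | heX
        · exact ⟨haV', hbV', hab⟩
        · have heA : e ∈ A := hXA heX
          obtain ⟨h1, h2', h3⟩ := hg.2 e heA
          refine ⟨Finset.mem_erase.2 ⟨?_, h1⟩, Finset.mem_erase.2 ⟨?_, h2'⟩, h3⟩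
          · intro hc
            apply ((hmemX e).1 heX).2.2
            have : e.2 = b := out_unique e.2 (by rw [← hc]; exact (show (e.1, e.2) ∈ A from heA))
            rw [← hc, ← this]
          · intro hc
            apply ((hmemX e).1 heX).2.1
            have : e.1 = a := in_unique e.1 (by rw [← hc]; exact (show (e.1, e.2) ∈ A from heA))
            rw [← hc, ← this]
      obtain ⟨B, hBA', hBsc, hBmin⟩ := exists_msc_subset A' hsc'
      have hBmsc : MSC V' B := ⟨hBsc, hBmin⟩
      have hBgood : GoodDigraph V' B := ⟨⟨a, haV'⟩, fun e he => hgood'.2 e (hBA' he)⟩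
      have hV'card : V'.card = V.card - 1 := Finset.card_erase_of_mem hvV
      have hBbound : B.card ≤ 2 * (V'.card - 1) := msc_card_le hBgood hBmsc
      -- lift
      set L : Finset (α × α) := insert (a, v) (insert (v, b) (B.erase (a, b))) with hL
      have hLA : L ⊆ A := by
        apply Finset.insert_subset havA
        apply Finset.insert_subset hvbA
        intro e he
        rw [Finset.mem_erase] at he
        rcases Finset.mem_insert.1 (hBA' he.2) with hc | hc
        · exact absurd hc he.1
        · exact hXA hc
      have hliftreach : ∀ x y : α, Reach B x y → Reach L x y := by
        intro x y hxy
        induction hxy with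
        | refl => exact reach_refl _
        | @tail p q h1 h2 ih =>
          by_cases hpq : (p, q) = (a, b)
          · have hp : p = a := congrArg Prod.fst hpq
            have hq : q = b := congrArg Prod.snd hpq
            rw [hq]
            rw [hp] at ih
            have s1 : Reach L a v := reach_single (Finset.mem_insert_self _ _)
            have s2 : Reach L v b :=
              reach_single (Finset.mem_insert_of_mem (Finset.mem_insert_self _ _))
            exact reach_trans ih (reach_trans s1 s2)
          · refine Relation.ReflTransGen.tail ih ?_
            exact Finset.mem_insert_of_mem (Finset.mem_insert_of_mem
              (Finset.mem_erase.2 ⟨hpq, h2⟩))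
      have hLsc : StrongConn V L := by
        have havL : (a, v) ∈ L := Finset.mem_insert_self _ _
        have hvbL : (v, b) ∈ L := Finset.mem_insert_of_mem (Finset.mem_insert_self _ _)
        intro x hx y hy
        by_cases hxv : x = v <;> by_cases hyv : y = v
        · subst hxv; subst hyv; exact reach_refl _
        · subst hxv
          refine reach_trans (reach_single hvbL) (hliftreach _ _ ?_)
          exact hBsc b hbV' y (Finset.mem_erase.2 ⟨hyv, hy⟩)
        · subst hyv
          refine reach_trans (hliftreach _ _ ?_) (reach_single havL)
          exact hBsc x (Finset.mem_erase.2 ⟨hxv, hx⟩) a haV'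
        · exact hliftreach _ _ (hBsc x (Finset.mem_erase.2 ⟨hxv, hx⟩) y (Finset.mem_erase.2 ⟨hyv, hy⟩))
      have hAL : A = L := msc_eq_of_subset h hLA hLsc
      -- cardinalities
      have hXcard : X.card = A.card - 2 := by
        have hvbA' : (v, b) ∈ A.erase (a, v) :=
          Finset.mem_erase.2 ⟨fun hc => hav (congrArg Prod.fst hc).symm, hvbA⟩
        rw [hX, Finset.card_erase_of_mem hvbA', Finset.card_erase_of_mem havA]
        omega
      have hA'card : A'.card = A.card - 1 := by
        rw [hA', Finset.card_insert_of_notMem (fun hc => hab_notA (hXA hc)), hXcard]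
        omega
      have hBab : (a, b) ∉ B := by
        intro hc
        have h1 : L.card ≤ B.card - 1 + 2 := by
          calc L.card ≤ (insert (v, b) (B.erase (a, b))).card + 1 := Finset.card_insert_le _ _
            _ ≤ (B.erase (a, b)).card + 1 + 1 := by
                have := Finset.card_insert_le (v, b) (B.erase (a, b)); omega
            _ = B.card - 1 + 2 := by rw [Finset.card_erase_of_mem hc]
        rw [← hAL] at h1
        have hBpos : 1 ≤ B.card := Finset.card_pos.2 ⟨_, hc⟩
        omega
      have hBcard : B.card = A.card - 2 := by
        have h1 : L.card ≤ B.card + 2 := by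
          calc L.card ≤ (insert (v, b) (B.erase (a, b))).card + 1 := Finset.card_insert_le _ _
            _ ≤ (B.erase (a, b)).card + 1 + 1 := by
                have := Finset.card_insert_le (v, b) (B.erase (a, b)); omega
            _ = B.card + 2 := by rw [Finset.erase_eq_of_notMem hBab]
        rw [← hAL] at h1
        omega
      have hBX : B = X := by
        apply Finset.eq_of_subset_of_card_le
        · intro e he
          rcases Finset.mem_insert.1 (hBA' he) with hc | hc
          · exact absurd (hc ▸ he) hBab
          · exact hc
        · omega
      have hsymB := ih V' B (by omega) hBgood hBmsc (by omega) (by omega)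
      -- extract a first arc (a, c) of a B-path from a to b avoiding re-entering a
      set Ba : Finset (α × α) := B.filter (fun e => e.2 ≠ a) with hBa
      have hBaB : Ba ⊆ B := Finset.filter_subset _ _
      have extract : ∀ x y : α, Reach B x y → y ≠ a →
          (Reach Ba x y ∨ ∃ c, (a, c) ∈ B ∧ Reach Ba c y) := by
        intro x y hxy
        induction hxy with
        | refl => intro _; exact Or.inl (reach_refl _)
        | @tail p q h1 h2 ih =>
          intro hq
          by_cases hp : p = a
          · subst hp
            exact Or.inr ⟨q, h2, reach_refl _⟩
          · have harc : (p, q) ∈ Ba := Finset.mem_filter.2 ⟨h2, hq⟩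
            rcases ih hp with hl | ⟨c, hc1, hc2⟩
            · exact Or.inl (Relation.ReflTransGen.tail hl harc)
            · exact Or.inr ⟨c, hc1, Relation.ReflTransGen.tail hc2 harc⟩
      have hreachBab : Reach B a b := hBsc a haV' b hbV'
      obtain ⟨c, hcB, hcb⟩ : ∃ c, (a, c) ∈ B ∧ Reach Ba c b := by
        rcases extract a b hreachBab (Ne.symm hab) with hl | hr
        · obtain ⟨c, hc1, hc2⟩ := reach_first hl hab
          exact ⟨c, hBaB hc1, hc2⟩
        · exact hr
      have hcA : (a, c) ∈ A := hXA (hBX ▸ hcB)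
      have hcV' : c ∈ V' := (hBgood.2 _ hcB).2.1
      have hcv : c ≠ v := (Finset.mem_erase.1 hcV').1
      have hca : c ≠ a := ((hBgood.2 _ hcB).2.2).symm
      -- walk back from b to c avoiding (a, c)
      have back : ∀ y : α, Reach Ba c y → Reach (A.erase (a, c)) y c := by
        intro y hy
        induction hy with
        | refl => exact reach_refl _
        | @tail p q h1 h2 ih =>
          have hpqB : (p, q) ∈ B := hBaB h2
          have hqpB : (q, p) ∈ B := hsymB p q hpqB
          have hqa : q ≠ a := (Finset.mem_filter.1 h2).2
          refine Relation.ReflTransGen.head (Finset.mem_erase.2 ⟨?_, hXA (hBX ▸ hqpB)⟩) ih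
          intro hc; exact hqa (congrArg Prod.fst hc)
      have hreach_ac : Reach (A.erase (a, c)) a c := by
        have s1 : Reach (A.erase (a, c)) a v :=
          reach_single (Finset.mem_erase.2 ⟨fun hc => hcv (congrArg Prod.snd hc).symm, havA⟩)
        have s2 : Reach (A.erase (a, c)) v b :=
          reach_single (Finset.mem_erase.2 ⟨fun hc => hav (congrArg Prod.fst hc).symm, hvbA⟩)
        exact reach_trans s1 (reach_trans s2 (back b hcb))
      exact h.2 (a, c) hcA (fun x hx y hy => reach_erase (e := (a, c)) hreach_ac (h.1 x hx y hy))
end Aux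

namespace Aux
variable {α : Type*} [DecidableEq α]

lemma fromRel_connected {V : Finset α} {A : Finset (α × α)} (hg : GoodDigraph V A)
    (hsc : StrongConn V A) :
    (SimpleGraph.fromRel (fun a b : {x // x ∈ V} => ((a : α), (b : α)) ∈ A)).Connected := by
  set G := SimpleGraph.fromRel (fun a b : {x // x ∈ V} => ((a : α), (b : α)) ∈ A) with hG
  have hne : Nonempty {x // x ∈ V} := by
    obtain ⟨r, hr⟩ := hg.1; exact ⟨⟨r, hr⟩⟩
  rw [SimpleGraph.connected_iff]
  refine ⟨?_, hne⟩
  have gen : ∀ (u w : α), Reach A u w → ∀ (hu : u ∈ V) (hw : w ∈ V),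
      G.Reachable ⟨u, hu⟩ ⟨w, hw⟩ := by
    intro u w hr
    induction hr with
    | refl => intro hu hw; exact SimpleGraph.Reachable.refl _
    | @tail p q h1 h2 ih =>
      intro hu hw
      have hp : p ∈ V := (hg.2 _ h2).1
      refine (ih hu hp).trans (SimpleGraph.Adj.reachable ?_)
      rw [hG, SimpleGraph.fromRel_adj]
      exact ⟨fun hc => (hg.2 _ h2).2.2 (congrArg Subtype.val hc), Or.inl h2⟩
  intro x y
  have := gen ↑x ↑y (hsc _ x.2 _ y.2) x.2 y.2
  exact this

lemma fromRel_acyclic {V : Finset α} {A : Finset (α × α)} (hg : GoodDigraph V A)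
    (h : MSC V A) (hsym : ∀ u w : α, (u, w) ∈ A → (w, u) ∈ A) :
    (SimpleGraph.fromRel (fun a b : {x // x ∈ V} => ((a : α), (b : α)) ∈ A)).IsAcyclic := by
  set G := SimpleGraph.fromRel (fun a b : {x // x ∈ V} => ((a : α), (b : α)) ∈ A) with hG
  have adj_arc : ∀ {x y : {v // v ∈ V}}, G.Adj x y → ((x : α), (y : α)) ∈ A := by
    intro x y hadj
    rw [hG, SimpleGraph.fromRel_adj] at hadj
    rcases hadj.2 with hc | hc
    · exact hc
    · exact hsym _ _ hc
  intro x c hc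
  cases c with
  | nil => exact hc.ne_nil rfl
  | @cons _ y _ hadj p =>
    have hxyA : ((x : α), (y : α)) ∈ A := adj_arc hadj
    have hxny : x ≠ y := hadj.ne
    have hnodup := hc.edges_nodup
    rw [SimpleGraph.Walk.edges_cons, List.nodup_cons] at hnodup
    have hnotmem : s(x, y) ∉ p.edges := hnodup.1
    -- any walk avoiding the edge s(x,y) gives reach avoiding the arc (x,y)
    have walk_reach : ∀ {u w : {v // v ∈ V}} (q : G.Walk u w), s(x, y) ∉ q.edges →
        Reach (A.erase ((x : α), (y : α))) (u : α) (w : α) := by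
      intro u w q
      induction q with
      | nil => intro _; exact reach_refl _
      | @cons u' m' w' hadj' q' ih =>
        intro hnm
        rw [SimpleGraph.Walk.edges_cons, List.mem_cons] at hnm
        push_neg at hnm
        refine Relation.ReflTransGen.head (Finset.mem_erase.2 ⟨?_, adj_arc hadj'⟩) (ih hnm.2)
        intro hcc
        apply hnm.1
        have h1 : (u' : α) = (x : α) := congrArg Prod.fst hcc
        have h2 : (m' : α) = (y : α) := congrArg Prod.snd hcc
        rw [Subtype.ext h1, Subtype.ext h2]
    have hrev : s(x, y) ∉ p.reverse.edges := by
      rw [SimpleGraph.Walk.edges_reverse, List.mem_reverse]; exact hnotmem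
    have hreach := walk_reach p.reverse hrev
    exact h.2 ((x : α), (y : α)) hxyA
      (fun u hu w hw => reach_erase (e := ((x : α), (y : α))) hreach (h.1 u hu w hw))

lemma card_arcs_eq_two_mul {V : Finset α} {A : Finset (α × α)} (hg : GoodDigraph V A)
    (hsym : ∀ u w : α, (u, w) ∈ A → (w, u) ∈ A) :
    A.card = 2 * (A.image (Function.uncurry Sym2.mk)).card := by
  rw [Finset.card_eq_sum_card_fiberwise (fun e he => Finset.mem_image_of_mem (Function.uncurry Sym2.mk) he)]
  rw [Finset.sum_congr rfl (g := fun _ => 2), Finset.sum_const, smul_eq_mul, mul_comm]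
  intro s hs
  obtain ⟨⟨u, w⟩, huw, rfl⟩ := Finset.mem_image.1 hs
  have hne : u ≠ w := (hg.2 _ huw).2.2
  have : A.filter (fun e => (Function.uncurry Sym2.mk) e = (Function.uncurry Sym2.mk) (u, w)) = {(u, w), (w, u)} := by
    ext ⟨e1, e2⟩
    rw [Finset.mem_filter]
    constructor
    · rintro ⟨hmem, heq⟩
      rw [show (Function.uncurry Sym2.mk) (e1, e2) = s(e1, e2) from rfl,
        show (Function.uncurry Sym2.mk) (u, w) = s(u, w) from rfl, Sym2.eq_iff] at heq
      rcases heq with ⟨rfl, rfl⟩ | ⟨rfl, rfl⟩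
      · exact Finset.mem_insert_self _ _
      · exact Finset.mem_insert_of_mem (Finset.mem_singleton_self _)
    · intro hmem
      rcases Finset.mem_insert.1 hmem with hc | hc
      · rw [hc]; exact ⟨huw, rfl⟩
      · rw [Finset.mem_singleton] at hc
        rw [hc]
        refine ⟨hsym _ _ huw, ?_⟩
        rw [show (Function.uncurry Sym2.mk) (w, u) = s(w, u) from rfl, show (Function.uncurry Sym2.mk) (u, w) = s(u, w) from rfl,
          Sym2.eq_iff]
        right; exact ⟨rfl, rfl⟩
  rw [this, Finset.card_insert_of_notMem, Finset.card_singleton]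
  rw [Finset.mem_singleton]
  intro hc
  exact hne (congrArg Prod.fst hc)

lemma card_edgeFinset_eq {V : Finset α} {A : Finset (α × α)} (hg : GoodDigraph V A)
    (hsym : ∀ u w : α, (u, w) ∈ A → (w, u) ∈ A)
    [Fintype ((SimpleGraph.fromRel
        (fun a b : {x // x ∈ V} => ((a : α), (b : α)) ∈ A)).edgeSet)] :
    ((SimpleGraph.fromRel
        (fun a b : {x // x ∈ V} => ((a : α), (b : α)) ∈ A)).edgeFinset).card
      = (A.image (Function.uncurry Sym2.mk)).card := by
  have hinj : Function.Injective (Sym2.map (Subtype.val : {x // x ∈ V} → α)) :=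
    Sym2.map.injective Subtype.val_injective
  have himg : ((SimpleGraph.fromRel
      (fun a b : {x // x ∈ V} => ((a : α), (b : α)) ∈ A)).edgeFinset).image
        (Sym2.map Subtype.val) = A.image (Function.uncurry Sym2.mk) := by
    ext s
    simp only [Finset.mem_image, SimpleGraph.mem_edgeFinset]
    constructor
    · rintro ⟨e, he, rfl⟩
      induction e with
      | _ a b =>
        rw [SimpleGraph.mem_edgeSet, SimpleGraph.fromRel_adj] at he
        have harc : ((a : α), (b : α)) ∈ A := by
          rcases he.2 with hc | hc
          · exact hc
          · exact hsym _ _ hc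
        exact ⟨((a : α), (b : α)), harc, rfl⟩
    · rintro ⟨⟨u, w⟩, huw, rfl⟩
      obtain ⟨hu, hw, hne⟩ := hg.2 _ huw
      refine ⟨s(⟨u, hu⟩, ⟨w, hw⟩), ?_, rfl⟩
      rw [SimpleGraph.mem_edgeSet, SimpleGraph.fromRel_adj]
      exact ⟨fun hc => hne (congrArg Subtype.val hc), Or.inl huw⟩
  rw [← himg, Finset.card_image_of_injective _ hinj]

end Aux


/-- an MSC digraph of order `n ≥ 2` has exactly `2(n-1)` arcs iff
it is a directed tree. -/
theorem stmt_5 {α : Type*} [DecidableEq α] (V : Finset α) (A : Finset (α × α))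
    (hg : GoodDigraph V A) (hn : 2 ≤ V.card) (h : MSC V A) :
    A.card = 2 * (V.card - 1) ↔ IsDirTree V A := by
  classical
  constructor
  · intro hcard
    have hsym : ∀ u v : α, (u, v) ∈ A → (v, u) ∈ A :=
      fun u v huv => Aux.sym_of_msc_card V.card V A le_rfl hg h hn hcard u v huv
    exact ⟨hsym, ⟨Aux.fromRel_connected hg h.1, Aux.fromRel_acyclic hg h hsym⟩⟩
  · intro ht
    obtain ⟨hsym, htree⟩ := ht
    haveI : Fintype ((SimpleGraph.fromRel
        (fun a b : {x // x ∈ V} => ((a : α), (b : α)) ∈ A)).edgeSet) :=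
      Fintype.ofFinite _
    have h1 := Aux.card_arcs_eq_two_mul hg (fun u w => hsym u w)
    have h2 := Aux.card_edgeFinset_eq hg (fun u w => hsym u w)
    have h3 := htree.card_edgeFinset
    rw [Fintype.card_coe] at h3
    omega
end

section
/- Let D = (V, A) be a minimal strongly connected digraph and let u, w ∈ V with u ≠ w and (u,w) ∉ A. The external expansion e_{uw}(D) of D by a new vertex v (adding v and the arcs (u,v), (v,w)) is minimal strongly connected if and only if the digraph D + (u,w) has no transitive arc distinct from (u,w). -/
section helpers
variable {α : Type*} {r s : α → α → Prop}

lemma myChain'_cons {R : α → α → Prop} {a b : α} {l : List α} :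
    List.Chain' R (a :: b :: l) ↔ R a b ∧ List.Chain' R (b :: l) := List.isChain_cons_cons

lemma myReachMono (h : ∀ a b, r a b → Relation.ReflTransGen s a b) {x y : α}
    (hr : Relation.ReflTransGen r x y) : Relation.ReflTransGen s x y := by
  induction hr with
  | refl => exact .refl
  | tail _ hstep ih => exact ih.trans (h _ _ hstep)

lemma myReachOfChain : ∀ (l : List α), l.Chain' r → ∀ {p q : α}, l.head? = some p →
    l.getLast? = some q → Relation.ReflTransGen r p q
  | [], _, _, _, hp, _ => by simp at hp
  | [a], _, p, q, hp, hq => by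
      simp at hp hq; subst hp; subst hq; exact .refl
  | a :: b :: t, hc, p, q, hp, hq => by
      rw [myChain'_cons] at hc
      simp only [List.head?_cons, Option.some.injEq] at hp
      subst hp
      rw [List.getLast?_cons_cons] at hq
      exact Relation.ReflTransGen.head hc.1 (myReachOfChain (b :: t) hc.2 rfl hq)

lemma myChainImpMem : ∀ (l : List α), l.Chain' r →
    (∀ a ∈ l, ∀ b ∈ l, r a b → s a b) → l.Chain' s
  | [], _, _ => List.IsChain.nil
  | [_], _, _ => List.IsChain.singleton _
  | a :: b :: t, hc, hmem => by
      rw [myChain'_cons] at hc ⊢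
      refine ⟨hmem a (by simp) b (by simp) hc.1, myChainImpMem (b :: t) hc.2 ?_⟩
      exact fun x hx y hy => hmem x (List.mem_cons_of_mem _ hx) y (List.mem_cons_of_mem _ hy)

lemma myExistsNodupChain {p q : α} (h : Relation.ReflTransGen r p q) :
    ∃ l : List α, l.Chain' r ∧ l.head? = some p ∧ l.getLast? = some q ∧ l.Nodup := by
  induction h using Relation.ReflTransGen.head_induction_on with
  | refl => exact ⟨[q], List.IsChain.singleton _, by simp, by simp, by simp⟩
  | @head a c hstep _ ih =>
      obtain ⟨l, hc, hh, hl, hnd⟩ := ih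
      by_cases ha : a ∈ l
      · obtain ⟨s1, t1, rfl⟩ := List.append_of_mem ha
        refine ⟨a :: t1, hc.suffix ⟨s1, rfl⟩, by simp, ?_, ?_⟩
        · rw [← hl, List.getLast?_append_cons]
        · exact (List.nodup_append.mp hnd).2.1
      · cases l with
        | nil => simp at hh
        | cons b t =>
            simp only [List.head?_cons, Option.some.injEq] at hh
            subst hh
            exact ⟨a :: b :: t, myChain'_cons.mpr ⟨hstep, hc⟩, by simp,
              by rw [List.getLast?_cons_cons]; exact hl, List.nodup_cons.mpr ⟨ha, hnd⟩⟩

lemma myChainAvoid {p q : α} (l : List α) (hc : l.Chain' r) (hp : l.head? = some p)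
    (hq : l.getLast? = some q) (hnd : l.Nodup) (hne : l ≠ [p, q]) :
    Relation.ReflTransGen (fun a b => r a b ∧ ¬(a = p ∧ b = q)) p q := by
  cases l with
  | nil => simp at hp
  | cons a t =>
    simp only [List.head?_cons, Option.some.injEq] at hp
    subst hp
    cases t with
    | nil => simp at hq; subst hq; exact .refl
    | cons b t' =>
      rw [List.getLast?_cons_cons] at hq
      rw [myChain'_cons] at hc
      have hpn : a ∉ b :: t' := (List.nodup_cons.mp hnd).1
      have hbq : b ≠ q := by
        rintro rfl
        cases t' with
        | nil => exact hne rfl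
        | cons c t'' =>
            rw [List.getLast?_cons_cons] at hq
            have hb : b ∈ c :: t'' := by
              have h2 := List.getLast?_eq_getLast_of_ne_nil (l := c :: t'') (by simp)
              rw [h2, Option.some.injEq] at hq
              exact hq ▸ List.getLast_mem _
            exact (List.nodup_cons.mp (List.nodup_cons.mp hnd).2).1 hb
      refine Relation.ReflTransGen.head ⟨hc.1, fun h => hbq h.2⟩ ?_
      refine myReachOfChain (b :: t') ?_ rfl hq
      refine myChainImpMem _ hc.2 ?_
      exact fun x hx y hy hxy => ⟨hxy, fun h => hpn (h.1 ▸ hx)⟩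

lemma myNoIn {v x : α} (hno : ∀ c, ¬ r c v) (h : Relation.ReflTransGen r x v) : x = v := by
  rcases h.cases_tail with h1 | ⟨c, _, hc⟩
  · exact h1.symm
  · exact absurd hc (hno c)

lemma myNoOut {v y : α} (hno : ∀ c, ¬ r v c) (h : Relation.ReflTransGen r v y) : y = v := by
  rcases h.cases_head with h1 | ⟨c, hc, _⟩
  · exact h1.symm
  · exact absurd hc (hno c)

end helpers

section digraph
variable {α : Type*} [DecidableEq α]

lemma myReachExpand {B : Finset (α × α)} {u w v x y : α}
    (h : Reach (insert (u, w) B) x y) :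
    Reach (insert (u, v) (insert (v, w) B)) x y := by
  refine myReachMono (fun a b hab => ?_) h
  rcases Finset.mem_insert.mp hab with h1 | h1
  · rw [Prod.ext_iff] at h1
    obtain ⟨rfl, rfl⟩ := h1
    exact Relation.ReflTransGen.head (show ((a,v) ∈ _) by simp)
      (Relation.ReflTransGen.single (show ((v,b) ∈ _) by simp))
  · exact Relation.ReflTransGen.single (show ((a,b) ∈ _) by simp [h1])

lemma myReachShrink {V : Finset α} {B : Finset (α × α)} {u w v : α}
    (hB : ∀ a ∈ B, a.1 ∈ V ∧ a.2 ∈ V) (hv : v ∉ V) (hu : u ∈ V) (hw : w ∈ V)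
    {x y : α} (h : Reach (insert (u, v) (insert (v, w) B)) x y) (hy : y ∈ V) :
    (x ∈ V → Reach (insert (u, w) B) x y) ∧ (x = v → Reach (insert (u, w) B) w y) := by
  have h' : Relation.ReflTransGen (fun a b => (a, b) ∈ insert (u, v) (insert (v, w) B)) x y := h
  clear h
  induction h' using Relation.ReflTransGen.head_induction_on with
  | refl => exact ⟨fun _ => .refl, fun hxy => absurd (hxy ▸ hy) hv⟩
  | @head a c hstep _ ih =>
      rcases Finset.mem_insert.mp hstep with h1 | h1
      · rw [Prod.ext_iff] at h1
        obtain ⟨rfl, rfl⟩ := h1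
        refine ⟨fun _ => Relation.ReflTransGen.head ?_ (ih.2 rfl), fun hav => absurd (hav ▸ hu) hv⟩
        · exact Finset.mem_insert_self _ _
      · rcases Finset.mem_insert.mp h1 with h2 | h2
        · rw [Prod.ext_iff] at h2
          obtain ⟨rfl, rfl⟩ := h2
          exact ⟨fun haV => absurd haV hv, fun _ => ih.1 hw⟩
        · refine ⟨fun _ => Relation.ReflTransGen.head (Finset.mem_insert_of_mem h2) (ih.1 (hB _ h2).2),
            fun hav => absurd (hav ▸ (hB _ h2).1) hv⟩

lemma mySCExtIff {V : Finset α} {B : Finset (α × α)} {u w v : α}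
    (hB : ∀ a ∈ B, a.1 ∈ V ∧ a.2 ∈ V) (hv : v ∉ V) (hu : u ∈ V) (hw : w ∈ V) :
    StrongConn (insert v V) (insert (u, v) (insert (v, w) B)) ↔
      StrongConn V (insert (u, w) B) := by
  constructor
  · intro h x hx y hy
    exact (myReachShrink hB hv hu hw
      (h x (Finset.mem_insert_of_mem hx) y (Finset.mem_insert_of_mem hy)) hy).1 hx
  · intro h x hx y hy
    rcases Finset.mem_insert.mp hx with hx' | hx' <;> rcases Finset.mem_insert.mp hy with hy' | hy'
    · subst hx'; subst hy'; exact .refl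
    · subst hx'
      exact Relation.ReflTransGen.head
        (show ((x, w) ∈ insert (u, x) (insert (x, w) B)) by simp)
        (myReachExpand (h w hw y hy'))
    · subst hy'
      exact Relation.ReflTransGen.tail (myReachExpand (h x hx' u hu))
        (show ((u, y) ∈ insert (u, y) (insert (y, w) B)) by simp)
    · exact myReachExpand (h x hx' y hy')

end digraph

/-- for an MSC digraph `D` and vertices `u ≠ w` with `(u,w) ∉ A`,
the external expansion `e_{uw}(D)` by a new vertex `v` is MSC iff the digraph
`D + (u,w)` has no transitive arc distinct from `(u,w)`. -/
theorem stmt_12 {α : Type*} [DecidableEq α] (V : Finset α) (A : Finset (α × α))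
    (u w v : α) (hg : GoodDigraph V A) (h : MSC V A)
    (hu : u ∈ V) (hw : w ∈ V) (huw : u ≠ w) (hnA : (u, w) ∉ A) (hv : v ∉ V) :
    MSC (insert v V) (insert (u, v) (insert (v, w) A)) ↔
      ∀ p q : α, TransArc (insert (u, w) A) p q → (p, q) = (u, w) := by
  have hgA : ∀ a ∈ A, a.1 ∈ V ∧ a.2 ∈ V := fun a ha => ⟨(hg.2 a ha).1, (hg.2 a ha).2.1⟩
  have hne_uv : ∀ a ∈ A, a ≠ (u, v) := by
    intro a ha hEq
    rw [hEq] at ha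
    exact hv (hgA _ ha).2
  have hne_vw : ∀ a ∈ A, a ≠ (v, w) := by
    intro a ha hEq
    rw [hEq] at ha
    exact hv (hgA _ ha).1
  have key : ∀ a ∈ A,
      (StrongConn (insert v V) ((insert (u, v) (insert (v, w) A)).erase a) ↔
        StrongConn V (insert (u, w) (A.erase a))) := by
    intro a ha
    have h1 : (u, v) ≠ a := fun hEq => hne_uv a ha hEq.symm
    have h2 : (v, w) ≠ a := fun hEq => hne_vw a ha hEq.symm
    rw [Finset.erase_insert_of_ne h1, Finset.erase_insert_of_ne h2]
    exact mySCExtIff (fun b hb => hgA b (Finset.mem_of_mem_erase hb)) hv hu hw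
  have reach_avoid : ∀ p q : α, (p, q) ∈ A → ∀ l, IsPath (insert (u, w) A) p q l →
      l ≠ [p, q] → Reach (insert (u, w) (A.erase (p, q))) p q := by
    intro p q hpq l hl hne
    obtain ⟨hc, hh, hlast, hnd⟩ := hl
    have h1 := myChainAvoid (r := fun a b => (a, b) ∈ insert (u, w) A) l hc hh hlast hnd hne
    refine myReachMono (fun a b hab => Relation.ReflTransGen.single ?_) h1
    rcases Finset.mem_insert.mp hab.1 with h2 | h2
    · rw [h2]; exact Finset.mem_insert_self _ _
    · refine Finset.mem_insert_of_mem (Finset.mem_erase.mpr ⟨?_, h2⟩)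
      intro hEq
      rw [Prod.ext_iff] at hEq
      exact hab.2 ⟨hEq.1, hEq.2⟩
  have sc_of_reach : ∀ p q : α, Reach (insert (u, w) (A.erase (p, q))) p q →
      StrongConn V (insert (u, w) (A.erase (p, q))) := by
    intro p q hr x hx y hy
    refine myReachMono (fun a b hab => ?_) (h.1 x hx y hy)
    by_cases hEq : (a, b) = (p, q)
    · rw [Prod.ext_iff] at hEq
      obtain ⟨rfl, rfl⟩ := hEq
      exact hr
    · exact Relation.ReflTransGen.single
        (Finset.mem_insert_of_mem (Finset.mem_erase.mpr ⟨hEq, hab⟩))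
  have trans_of_sc : ∀ p q : α, (p, q) ∈ A →
      StrongConn V (insert (u, w) (A.erase (p, q))) → TransArc (insert (u, w) A) p q := by
    intro p q hpq hsc
    have hr : Reach (insert (u, w) (A.erase (p, q))) p q :=
      hsc p (hgA _ hpq).1 q (hgA _ hpq).2
    obtain ⟨l, hc, hh, hlast, hnd⟩ := myExistsNodupChain hr
    refine ⟨Finset.mem_insert_of_mem hpq, l, ⟨?_, hh, hlast, hnd⟩, ?_⟩
    · refine List.IsChain.imp (fun a b hab => ?_) hc
      rcases Finset.mem_insert.mp hab with h2 | h2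
      · rw [h2]; exact Finset.mem_insert_self _ _
      · exact Finset.mem_insert_of_mem (Finset.mem_of_mem_erase h2)
    · intro hEq
      subst hEq
      have hst : (p, q) ∈ insert (u, w) (A.erase (p, q)) := (myChain'_cons.mp hc).1
      rcases Finset.mem_insert.mp hst with h2 | h2
      · exact hnA (h2 ▸ hpq)
      · exact (Finset.mem_erase.mp h2).1 rfl
  constructor
  · intro hmsc p q htr
    by_contra hne
    have hpqA : (p, q) ∈ A := by
      rcases Finset.mem_insert.mp htr.1 with h2 | h2
      · exact absurd h2 hne
      · exact h2
    obtain ⟨-, l, hl, hlne⟩ := htr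
    have hr := reach_avoid p q hpqA l hl hlne
    have hsc := sc_of_reach p q hr
    have hmem : (p, q) ∈ insert (u, v) (insert (v, w) A) :=
      Finset.mem_insert_of_mem (Finset.mem_insert_of_mem hpqA)
    exact hmsc.2 _ hmem ((key _ hpqA).mpr hsc)
  · intro hta
    refine ⟨?_, ?_⟩
    · refine (mySCExtIff hgA hv hu hw).mpr ?_
      intro x hx y hy
      exact myReachMono
        (fun a b hab => Relation.ReflTransGen.single (Finset.mem_insert_of_mem hab))
        (h.1 x hx y hy)
    · intro a ha hsc
      rcases Finset.mem_insert.mp ha with h2 | h2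
      · subst h2
        rw [Finset.erase_insert (by
          intro hmem
          rcases Finset.mem_insert.mp hmem with h3 | h3
          · rw [Prod.mk.injEq] at h3
            exact hv (h3.1 ▸ hu)
          · exact hne_uv _ h3 rfl)] at hsc
        have hreach : Reach (insert (v, w) A) u v :=
          hsc u (Finset.mem_insert_of_mem hu) v (Finset.mem_insert_self _ _)
        have hno : ∀ c, ¬ ((fun a b => (a, b) ∈ insert (v, w) A) c v) := by
          intro c hc
          rcases Finset.mem_insert.mp hc with h3 | h3
          · rw [Prod.mk.injEq] at h3
            exact hv (h3.2.symm ▸ hw)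
          · exact hv (hgA _ h3).2
        exact hv (myNoIn hno hreach ▸ hu)
      · rcases Finset.mem_insert.mp h2 with h3 | h3
        · subst h3
          rw [Finset.erase_insert_of_ne (by
              intro hEq
              rw [Prod.mk.injEq] at hEq
              exact hv (hEq.1 ▸ hu)),
            Finset.erase_insert (fun hmem => hne_vw _ hmem rfl)] at hsc
          have hreach : Reach (insert (u, v) A) v w :=
            hsc v (Finset.mem_insert_self _ _) w (Finset.mem_insert_of_mem hw)
          have hno : ∀ c, ¬ ((fun a b => (a, b) ∈ insert (u, v) A) v c) := by
            intro c hc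
            rcases Finset.mem_insert.mp hc with h4 | h4
            · rw [Prod.mk.injEq] at h4
              exact hv (h4.1.symm ▸ hu)
            · exact hv (hgA _ h4).1
          exact hv (myNoOut hno hreach ▸ hw)
        · obtain ⟨p, q⟩ := a
          have htr := trans_of_sc p q h3 ((key _ h3).mp hsc)
          exact hnA (hta p q htr ▸ h3)
end

section
/- Let D* be a minimal strongly connected digraph, v a linear vertex with unique in-neighbor u and unique out-neighbor w, and u ≠ w. If there is no directed path from u to w in D* other than the path u, v, w, then the digraph D obtained from D* by deleting v and its two incident arcs and adding the arc (u,w) is minimal strongly connected. -/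
theorem reach_exists_path {α : Type*} (A : Finset (α × α)) {x y : α}
    (h : Reach A x y) : ∃ l, IsPath A x y l := by
  induction h using Relation.ReflTransGen.head_induction_on with
  | refl => exact ⟨[y], by simp [IsPath]; exact List.isChain_singleton _⟩
  | head hab hr ih =>
    rename_i a c
    obtain ⟨l, hc, hh, hl, hn⟩ := ih
    by_cases hal : a ∈ l
    · obtain ⟨s, t, rfl⟩ := List.append_of_mem hal
      refine ⟨a :: t, hc.suffix ⟨s, rfl⟩, rfl, ?_, ?_⟩
      · rw [← List.getLast?_append_cons s a t]; exact hl
      · exact hn.sublist ((List.sublist_append_right s _))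
    · have hlne : l ≠ [] := by rintro rfl; simp at hh
      refine ⟨a :: l, List.isChain_cons.2 ⟨?_, hc⟩, rfl, ?_, ?_⟩
      · intro b hb; rw [hh] at hb; obtain rfl := Option.some_inj.1 hb; exact hab
      · rw [show a :: l = [a] ++ l from rfl, List.getLast?_append_of_ne_nil _ hlne]; exact hl
      · exact hn.cons hal


/-- if `v` is a linear vertex of an MSC digraph with unique
in-neighbor `u` and unique out-neighbor `w`, `u ≠ w`, and the only directed
path from `u` to `w` is `u, v, w`, then deleting `v` with its two arcs and
adding the arc `(u,w)` yields an MSC digraph. -/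
theorem stmt_14 {α : Type*} [DecidableEq α] (V : Finset α) (A : Finset (α × α))
    (hg : GoodDigraph V A) (h : MSC V A) (v u w : α)
    (huv : (u, v) ∈ A) (hvw : (v, w) ∈ A)
    (hin : ∀ x, (x, v) ∈ A → x = u) (hout : ∀ x, (v, x) ∈ A → x = w)
    (huw : u ≠ w)
    (hpath : ∀ l, IsPath A u w l → l = [u, v, w]) :
    MSC (V.erase v) (insert (u, w) ((A.erase (u, v)).erase (v, w))) := by
  obtain ⟨hVne, hgood⟩ := hg
  obtain ⟨hsc, hmin⟩ := h
  set B : Finset (α × α) := (A.erase (u, v)).erase (v, w) with hB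
  set A' : Finset (α × α) := insert (u, w) B with hA'
  have huV : u ∈ V := (hgood _ huv).1
  have hwV : w ∈ V := (hgood _ hvw).2.1
  have hunv : u ≠ v := (hgood _ huv).2.2
  have hvnw : v ≠ w := (hgood _ hvw).2.2
  have hBA : B ⊆ A := fun p hp => Finset.mem_of_mem_erase (Finset.mem_of_mem_erase hp)
  have huwA' : (u, w) ∈ A' := Finset.mem_insert_self _ _
  -- forward transformation of reachability
  have key : ∀ y, y ≠ v → ∀ x, Reach A x y →
      (x = v → Reach A' w y) ∧ (x ≠ v → Reach A' x y) := by
    intro y hy x hr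
    induction hr using Relation.ReflTransGen.head_induction_on with
    | refl => exact ⟨fun hxy => absurd hxy hy, fun _ => Relation.ReflTransGen.refl⟩
    | head hab hr ih =>
      rename_i p q
      constructor
      · intro hpv
        subst hpv
        obtain rfl : q = w := hout q hab
        exact ih.2 (Ne.symm hvnw)
      · intro hpv
        by_cases hqv : q = v
        · subst hqv
          obtain rfl : p = u := hin p hab
          exact Relation.ReflTransGen.head huwA' (ih.1 rfl)
        · have hpq : (p, q) ∈ A' := by
            refine Finset.mem_insert_of_mem (Finset.mem_erase.2 ⟨?_, Finset.mem_erase.2 ⟨?_, hab⟩⟩)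
            · simp only [ne_eq, Prod.mk.injEq, not_and]; intro hp; exact absurd hp hpv
            · simp only [ne_eq, Prod.mk.injEq, not_and]; intro _ hq; exact hqv hq
          exact Relation.ReflTransGen.head hpq (ih.2 hqv)
  have hsc' : StrongConn (V.erase v) A' := by
    intro x hx y hy
    exact (key y (Finset.ne_of_mem_erase hy) x
      (hsc x (Finset.mem_of_mem_erase hx) y (Finset.mem_of_mem_erase hy))).2
      (Finset.ne_of_mem_erase hx)
  refine ⟨hsc', ?_⟩
  intro a ha hcon
  rcases Finset.mem_insert.1 ha with rfl | haB
  · -- removing the new arc (u, w)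
    have hru : Reach (A'.erase (u, w)) u w :=
      hcon u (Finset.mem_erase.2 ⟨hunv, huV⟩) w (Finset.mem_erase.2 ⟨Ne.symm hvnw, hwV⟩)
    have hsub : A'.erase (u, w) ⊆ B := by
      intro p hp
      obtain ⟨hne, hmem⟩ := Finset.mem_erase.1 hp
      rcases Finset.mem_insert.1 hmem with h1 | h1
      · exact absurd h1 hne
      · exact h1
    have hrB : Reach B u w := Relation.ReflTransGen.mono (fun p q hpq => hsub hpq) _ _ hru
    obtain ⟨l, hc, hh, hl, hn⟩ := reach_exists_path B hrB
    have hleq : l = [u, v, w] :=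
      hpath l ⟨hc.imp (fun a b hab => hBA hab), hh, hl, hn⟩
    subst hleq
    have : ((u, v) : α × α) ∈ B := (List.isChain_cons_cons.1 hc).1
    simp [hB, Finset.mem_erase] at this
  · -- removing an old arc a ∈ B ⊆ A
    obtain ⟨hane2, hmem⟩ := Finset.mem_erase.1 haB
    obtain ⟨hane1, haA⟩ := Finset.mem_erase.1 hmem
    have huvA : ((u, v) : α × α) ∈ A.erase a := Finset.mem_erase.2 ⟨fun hh => hane1 hh.symm, huv⟩
    have hvwA : ((v, w) : α × α) ∈ A.erase a := Finset.mem_erase.2 ⟨fun hh => hane2 hh.symm, hvw⟩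
    have lift : ∀ x y : α, Reach (A'.erase a) x y → Reach (A.erase a) x y := by
      intro x y hr
      induction hr with
      | refl => exact Relation.ReflTransGen.refl
      | tail _ hbc ih =>
        rename_i b c _
        obtain ⟨hne, hmem'⟩ := Finset.mem_erase.1 hbc
        rcases Finset.mem_insert.1 hmem' with h1 | h1
        · obtain ⟨rfl, rfl⟩ := Prod.mk.injEq .. ▸ h1
          exact Relation.ReflTransGen.tail (Relation.ReflTransGen.tail ih huvA) hvwA
        · exact Relation.ReflTransGen.tail ih (Finset.mem_erase.2 ⟨hne, hBA h1⟩)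
    refine hmin a haA ?_
    intro x hx y hy
    by_cases hxv : x = v
    · rw [hxv]
      by_cases hyv : y = v
      · rw [hyv]; exact Relation.ReflTransGen.refl
      · exact Relation.ReflTransGen.head hvwA
          (lift w y (hcon w (Finset.mem_erase.2 ⟨Ne.symm hvnw, hwV⟩)
            y (Finset.mem_erase.2 ⟨hyv, hy⟩)))
    · by_cases hyv : y = v
      · rw [hyv]
        exact Relation.ReflTransGen.tail
          (lift x u (hcon x (Finset.mem_erase.2 ⟨hxv, hx⟩)
            u (Finset.mem_erase.2 ⟨hunv, huV⟩))) huvA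
      · exact lift x y (hcon x (Finset.mem_erase.2 ⟨hxv, hx⟩)
          y (Finset.mem_erase.2 ⟨hyv, hy⟩))
end

section
/- Let D* be a minimal strongly connected digraph and v a linear vertex with unique in-neighbor u and unique out-neighbor w, where u ≠ w. If there exists a directed path from u to w in D* distinct from the path u, v, w, then the digraph D* − v (obtained by deleting v and its incident arcs) is minimal strongly connected. -/
private lemma chain'_rtg {α : Type*} {r : α → α → Prop} :
    ∀ l : List α, l.Chain' r → ∀ u w, l.head? = some u → l.getLast? = some w →
      Relation.ReflTransGen r u w
  | [], _, u, w, h, _ => by simp at h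
  | [a], _, u, w, h1, h2 => by
      simp only [List.head?_cons, Option.some.injEq] at h1
      simp only [List.getLast?_singleton, Option.some.injEq] at h2
      subst h1; subst h2; exact .refl
  | a :: b :: t, hc, u, w, h1, h2 => by
      simp only [List.head?_cons, Option.some.injEq] at h1
      subst h1
      rw [List.Chain', List.isChain_cons_cons] at hc
      have := chain'_rtg (b :: t) hc.2 b w rfl (by simpa using h2)
      exact Relation.ReflTransGen.head hc.1 this

private lemma chain'_mem_imp {α : Type*} {r s : α → α → Prop} :
    ∀ l : List α, l.Chain' r → (∀ a ∈ l, ∀ b ∈ l, r a b → s a b) → l.Chain' s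
  | [], _, _ => List.isChain_nil
  | [a], _, _ => by simp [List.Chain']
  | a :: b :: t, hc, hm => by
      rw [List.Chain', List.isChain_cons_cons] at hc ⊢
      exact ⟨hm a (by simp) b (by simp) hc.1,
        chain'_mem_imp (b :: t) hc.2
          (fun x hx y hy => hm x (List.mem_cons_of_mem _ hx) y (List.mem_cons_of_mem _ hy))⟩

private lemma last_eq_head' {α : Type*} {a : α} {t : List α} (hn : (a :: t).Nodup)
    (hl : (a :: t).getLast (by simp) = a) : t = [] := by
  cases t with
  | nil => rfl
  | cons b s =>
    exfalso
    rw [List.getLast_cons (by simp)] at hl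
    have : a ∈ b :: s := hl ▸ List.getLast_mem (by simp)
    exact (List.nodup_cons.mp hn).1 this

/-- if `v` is a linear vertex of an MSC digraph with unique
in-neighbor `u` and unique out-neighbor `w`, `u ≠ w`, and there is a directed
path from `u` to `w` distinct from `u, v, w`, then deleting `v` and its
incident arcs yields an MSC digraph. -/
theorem stmt_15 {α : Type*} [DecidableEq α] (V : Finset α) (A : Finset (α × α))
    (hg : GoodDigraph V A) (h : MSC V A) (v u w : α)
    (huv : (u, v) ∈ A) (hvw : (v, w) ∈ A)
    (hin : ∀ x, (x, v) ∈ A → x = u) (hout : ∀ x, (v, x) ∈ A → x = w)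
    (huw : u ≠ w)
    (hpath : ∃ l, IsPath A u w l ∧ l ≠ [u, v, w]) :
    MSC (V.erase v) (A.filter (fun a => a.1 ≠ v ∧ a.2 ≠ v)) := by
  obtain ⟨hSC, hMin⟩ := h
  set A' := A.filter (fun a => a.1 ≠ v ∧ a.2 ≠ v) with hA'def
  have hsub : A' ⊆ A := Finset.filter_subset _ _
  have hneq : ∀ a ∈ A, a.1 ≠ a.2 := fun a ha => (hg.2 a ha).2.2
  have huv' : u ≠ v := hneq _ huv
  have hwv' : w ≠ v := fun e => (hneq _ hvw) e.symm
  have hmemA' : ∀ p q : α, (p, q) ∈ A → p ≠ v → q ≠ v → (p, q) ∈ A' := by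
    intro p q hpq hp hq
    exact Finset.mem_filter.mpr ⟨hpq, hp, hq⟩
  -- the alternative path avoids v
  obtain ⟨l, hl, hlne⟩ := hpath
  obtain ⟨hchain, hhead, hlast, hnodup⟩ := hl
  have hvl : v ∉ l := by
    intro hv
    obtain ⟨t, rfl⟩ : ∃ t, l = u :: t := by
      cases l with
      | nil => simp at hhead
      | cons a t =>
        simp only [List.head?_cons, Option.some.injEq] at hhead
        exact ⟨t, by rw [hhead]⟩
    have hvt : v ∈ t := by
      rcases List.mem_cons.mp hv with h1 | h1
      · exact absurd h1.symm huv'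
      · exact h1
    obtain ⟨t₁, t₂, rfl⟩ := List.append_of_mem hvt
    have hsplit : u :: (t₁ ++ v :: t₂) = (u :: t₁) ++ (v :: t₂) := by simp
    rw [hsplit] at hchain hnodup hlast hlne
    rw [List.Chain', List.isChain_append] at hchain
    have harc : ((u :: t₁).getLast (by simp), v) ∈ A := by
      refine hchain.2.2 _ ?_ v rfl
      simp [List.getLast?_eq_getLast]
    have hlastu : (u :: t₁).getLast (by simp) = u := hin _ harc
    have ht₁ : t₁ = [] := last_eq_head' (List.Nodup.of_append_left hnodup) hlastu
    subst ht₁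
    simp only [List.singleton_append] at hchain hnodup hlast hlne
    cases t₂ with
    | nil =>
      simp only [List.getLast?_cons_cons, List.getLast?_singleton, Option.some.injEq] at hlast
      exact hwv' hlast.symm
    | cons c t₃ =>
      have hc : (v, c) ∈ A := by
        have := hchain.2.1
        rw [List.isChain_cons_cons] at this
        exact this.1
      have hcw : c = w := hout _ hc
      have h1 : (u :: v :: c :: t₃).getLast (by simp) = (c :: t₃).getLast (by simp) := by
        rw [List.getLast_cons (by simp), List.getLast_cons (by simp)]
      have h2 : (u :: v :: c :: t₃).getLast? =
          some ((u :: v :: c :: t₃).getLast (by simp)) := List.getLast?_eq_getLast _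
      have h3 : (c :: t₃).getLast (by simp) = c := by
        have h4 := h2.symm.trans hlast
        rw [h1] at h4
        rw [Option.some.inj h4, hcw]
      have ht₃ : t₃ = [] :=
        last_eq_head' ((List.nodup_cons.mp (List.nodup_cons.mp hnodup).2).2) h3
      subst ht₃
      exact hlne (by rw [hcw])
  -- arcs of the path lie in A'
  have hchainA' : List.Chain' (fun a b => (a, b) ∈ A') l :=
    chain'_mem_imp l hchain (fun a ha b hb hab =>
      hmemA' a b hab (fun e => hvl (e ▸ ha)) (fun e => hvl (e ▸ hb)))
  have huw' : Reach A' u w := chain'_rtg l hchainA' u w hhead hlast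
  -- transfer lemma
  have transfer : ∀ x y, Reach A x y → y ≠ v →
      (x = v → Reach A' w y) ∧ (x ≠ v → Reach A' x y) := by
    intro x y hxy hy
    induction hxy using Relation.ReflTransGen.head_induction_on with
    | refl => exact ⟨fun e => absurd e hy, fun _ => .refl⟩
    | head hab hby ih =>
      rename_i p q
      constructor
      · intro hp
        subst hp
        have : q = w := hout _ hab
        subst this
        exact ih.2 hwv'
      · intro hp
        by_cases hq : q = v
        · subst hq
          have : p = u := hin _ hab
          subst this
          exact huw'.trans (ih.1 rfl)
        · exact Relation.ReflTransGen.head (hmemA' p q hab hp hq) (ih.2 hq)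
  have hSC' : StrongConn (V.erase v) A' := by
    intro x hx y hy
    rw [Finset.mem_erase] at hx hy
    exact (transfer x y (hSC x hx.2 y hy.2) hy.1).2 hx.1
  refine ⟨hSC', ?_⟩
  intro a ha hSCe
  rw [Finset.mem_filter] at ha
  apply hMin a ha.1
  have hmono : ∀ p q, Reach (A'.erase a) p q → Reach (A.erase a) p q := by
    intro p q hpq
    refine Relation.ReflTransGen.mono (fun s t hst => ?_) p q hpq
    rw [Finset.mem_erase] at hst ⊢
    exact ⟨hst.1, hsub hst.2⟩
  have huV : u ∈ V := (hg.2 _ huv).1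
  have hwV : w ∈ V := (hg.2 _ hvw).2.1
  have huV' : u ∈ V.erase v := Finset.mem_erase.mpr ⟨huv', huV⟩
  have hwV' : w ∈ V.erase v := Finset.mem_erase.mpr ⟨hwv', hwV⟩
  have hvw_ne : ((v, w) : α × α) ≠ a := fun e => ha.2.1 (by rw [← e])
  have huv_ne : ((u, v) : α × α) ≠ a := fun e => ha.2.2 (by rw [← e])
  intro x hx y hy
  by_cases hxv : x = v
  · rw [hxv]
    by_cases hyv : y = v
    · rw [hyv]; exact Relation.ReflTransGen.refl
    · have h1 : (v, w) ∈ A.erase a :=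
        Finset.mem_erase.mpr ⟨hvw_ne, hvw⟩
      exact Relation.ReflTransGen.head h1
        (hmono _ _ (hSCe w hwV' y (Finset.mem_erase.mpr ⟨hyv, hy⟩)))
  · by_cases hyv : y = v
    · rw [hyv]
      have h1 : (u, v) ∈ A.erase a :=
        Finset.mem_erase.mpr ⟨huv_ne, huv⟩
      exact Relation.ReflTransGen.tail
        (hmono _ _ (hSCe x (Finset.mem_erase.mpr ⟨hxv, hx⟩) u huV')) h1
    · exact hmono _ _ (hSCe x (Finset.mem_erase.mpr ⟨hxv, hx⟩) y
        (Finset.mem_erase.mpr ⟨hyv, hy⟩))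
end
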